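/- arXiv:1301.4269 — 11 statements merged into one kernel-verified Lean document; each statement's English description precedes it below -/
import Mathlib

section
/- Let p be a prime, D an integer with 1 ≤ D < p, and let A_1, …, A_k be (not necessarily distinct) D-APs in Z_p. Then the sumset satisfies |Σ_{i=1}^k A_i| = min{p, Σ_{i=1}^k |A_i| − k + 1}. -/
open Pointwise

/-- The (maximal, no wrap-around) `D`-AP in `ℤ_p` with base `b`:
`{b, b + D, b + 2D, …, b + ⌊(p − 1 − b)/D⌋ · D} ⊆ ℤ_p`. -/
def dAP (p D b : ℕ) : Finset (ZMod p) :=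
  (Finset.range ((p - 1 - b) / D + 1)).image (fun i => ((b + i * D : ℕ) : ZMod p))

open Finset

variable {p : ℕ}


/-- the image of `range n` in `ZMod p` -/
def Iv (p n : ℕ) : Finset (ZMod p) := (Finset.range n).image (Nat.cast)

lemma range_add_range (n m : ℕ) (hn : 1 ≤ n) (hm : 1 ≤ m) :
    Finset.range n + Finset.range m = Finset.range (n + m - 1) := by
  ext x
  simp only [Finset.mem_add, Finset.mem_range]
  constructor
  · rintro ⟨a, ha, b, hb, rfl⟩; omega
  · intro hx
    exact ⟨min x (n-1), by omega, x - min x (n-1), by omega, by omega⟩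

lemma Iv_add_Iv (n m : ℕ) (hn : 1 ≤ n) (hm : 1 ≤ m) :
    Iv p n + Iv p m = Iv p (n + m - 1) := by
  unfold Iv
  rw [← range_add_range n m hn hm]
  exact (Finset.image_add (Nat.castAddMonoidHom (ZMod p))).symm

lemma Iv_eq_univ [NeZero p] (n : ℕ) (h : p ≤ n) : Iv p n = Finset.univ := by
  ext x
  simp only [Finset.mem_univ, iff_true, Iv, Finset.mem_image, Finset.mem_range]
  exact ⟨x.val, lt_of_lt_of_le (ZMod.val_lt x) h, (ZMod.natCast_zmod_val x)⟩

lemma Iv_card [NeZero p] (n : ℕ) : (Iv p n).card = min p n := by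
  rcases le_total n p with h | h
  · rw [min_eq_right h]
    unfold Iv
    rw [Finset.card_image_of_injOn, Finset.card_range]
    intro a ha b hb hab
    simp only [Finset.coe_range, Set.mem_Iio] at ha hb
    have := congrArg ZMod.val hab
    rwa [ZMod.val_cast_of_lt (lt_of_lt_of_le ha h),
      ZMod.val_cast_of_lt (lt_of_lt_of_le hb h)] at this
  · rw [min_eq_left h, Iv_eq_univ n h, Finset.card_univ, ZMod.card]

lemma image_finsetSum {ι} (s : Finset ι) (S : ι → Finset (ZMod p)) (f : ZMod p →+ ZMod p) :
    (∑ i ∈ s, S i).image f = ∑ i ∈ s, (S i).image f := by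
  induction s using Finset.cons_induction with
  | empty => simp [show ((0 : Finset (ZMod p))) = {0} from rfl]
  | cons a s ha ih => rw [Finset.sum_cons, Finset.sum_cons, Finset.image_add f, ih]

lemma singleton_finsetSum {ι} (s : Finset ι) (b : ι → ZMod p) :
    ({∑ i ∈ s, b i} : Finset (ZMod p)) = ∑ i ∈ s, ({b i} : Finset (ZMod p)) := by
  induction s using Finset.cons_induction with
  | empty => simp [show ((0 : Finset (ZMod p))) = {0} from rfl]
  | cons a s ha ih => rw [Finset.sum_cons, Finset.sum_cons, ← ih, Finset.singleton_add_singleton]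

lemma Iv_finsetSum {ι} (s : Finset ι) (m : ι → ℕ) (hm : ∀ i ∈ s, 1 ≤ m i) :
    ∑ i ∈ s, Iv p (m i) = Iv p (∑ i ∈ s, m i - s.card + 1) := by
  induction s using Finset.cons_induction with
  | empty =>
      simp only [Finset.sum_empty, Finset.card_empty]
      ext x; simp [Iv, show ((0 : Finset (ZMod p))) = {0} from rfl, eq_comm]
  | cons a s ha ih =>
      have h1 : ∀ i ∈ s, 1 ≤ m i := fun i hi => hm i (Finset.mem_cons.2 (Or.inr hi))
      have hcard : s.card ≤ ∑ i ∈ s, m i := by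
        calc s.card = ∑ _i ∈ s, 1 := by simp
        _ ≤ ∑ i ∈ s, m i := Finset.sum_le_sum h1
      rw [Finset.sum_cons, Finset.sum_cons, ih h1,
        Iv_add_Iv (m a) _ (hm a (Finset.mem_cons_self a s)) (by omega), Finset.card_cons]
      have hma := hm a (Finset.mem_cons_self a s)
      congr 1
      omega

lemma dAP_eq (D b : ℕ) :
    dAP p D b = ({(b : ZMod p)} : Finset (ZMod p)) +
      (Iv p ((p - 1 - b) / D + 1)).image (AddMonoidHom.mulRight (D : ZMod p)) := by
  rw [Finset.singleton_add, Finset.vadd_finset_def, Iv, Finset.image_image, Finset.image_image]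
  unfold dAP
  congr 1
  funext i
  push_cast
  simp [AddMonoidHom.mulRight]


/-- For `D`-APs `A 1, …, A k` in `ℤ_p` (`p` prime, `1 ≤ D < p`),
`|A 1 + ⋯ + A k| = min {p, |A 1| + ⋯ + |A k| − k + 1}`. -/
theorem sumset_card_of_dAPs (p : ℕ) [Fact p.Prime] (D : ℕ) (hD1 : 1 ≤ D) (hDp : D < p)
    (k : ℕ) (A : Fin k → Finset (ZMod p)) (hA : ∀ i, ∃ b < D, A i = dAP p D b) :
    (∑ i, A i).card = min p (∑ i, (A i).card - k + 1) := by
  have hp : 1 ≤ p := (Fact.out : p.Prime).one_lt.le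
  choose b hb hAb using hA
  set m : Fin k → ℕ := fun i => (p - 1 - b i) / D + 1 with hm
  have hm1 : ∀ i, 1 ≤ m i := fun i => Nat.le_add_left 1 _
  have hmp : ∀ i, m i ≤ p := by
    intro i
    have := Nat.div_le_self (p - 1 - b i) D
    simp only [hm]
    omega
  have hD0 : (D : ZMod p) ≠ 0 := by
    rw [Ne, ZMod.natCast_eq_zero_iff]
    intro h
    exact absurd (Nat.le_of_dvd (by omega) h) (by omega)
  set f := AddMonoidHom.mulRight (D : ZMod p) with hf
  have finj : Function.Injective f := mul_left_injective₀ hD0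
  have hdecomp : ∀ i, A i = ({(b i : ZMod p)} : Finset (ZMod p)) + (Iv p (m i)).image f := by
    intro i; rw [hAb i, dAP_eq]
  have hcard : ∀ i, (A i).card = m i := by
    intro i
    rw [hdecomp i, Finset.card_singleton_add, Finset.card_image_of_injective _ finj,
      Iv_card, min_eq_right (hmp i)]
  have hk : (Finset.univ : Finset (Fin k)).card = k := by simp
  have hsum : ∑ i, A i =
      ({(∑ i, (b i : ZMod p)) } : Finset (ZMod p)) + (Iv p (∑ i, m i - k + 1)).image f := by
    calc ∑ i, A i = ∑ i, (({(b i : ZMod p)} : Finset (ZMod p)) + (Iv p (m i)).image f) := by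
            exact Finset.sum_congr rfl fun i _ => hdecomp i
      _ = (∑ i, ({(b i : ZMod p)} : Finset (ZMod p))) + ∑ i, (Iv p (m i)).image f :=
            Finset.sum_add_distrib
      _ = ({(∑ i, (b i : ZMod p))} : Finset (ZMod p)) + (∑ i, Iv p (m i)).image f := by
            rw [singleton_finsetSum, image_finsetSum]
      _ = _ := by
            rw [Iv_finsetSum _ _ (fun i _ => hm1 i), hk]
  rw [hsum, Finset.card_singleton_add, Finset.card_image_of_injective _ finj, Iv_card]
  congr 1
  exact (Finset.sum_congr rfl fun i _ => (hcard i).symm) ▸ rfl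
end

section
/- Let p be a prime, D an integer with 1 ≤ D < p, and let A_1, …, A_k be D-APs in Z_p. Then the sumset Σ_{i=1}^k A_i is contiguous relative to D. -/
open Pointwise

/-- The distance between `g₀, g₁ ∈ ℤ_p` relative to `p, D`:
`min {(g₁ − g₀)·D⁻¹ mod p, (g₀ − g₁)·D⁻¹ mod p}`, each term viewed as an
integer in `{0, …, p − 1}`. -/
def distPD (p D : ℕ) (g₀ g₁ : ZMod p) : ℕ :=
  min (((g₁ - g₀) * (D : ZMod p)⁻¹).val) (((g₀ - g₁) * (D : ZMod p)⁻¹).val)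

/-- A set `A ⊆ ℤ_p` is contiguous relative to `D` if its elements can be listed
so that consecutive elements are at distance `1` with respect to `distPD`. -/
def Contiguous (p D : ℕ) (A : Finset (ZMod p)) : Prop :=
  ∃ l : List (ZMod p), l.Nodup ∧ l.toFinset = A ∧
    l.Chain' (fun a b => distPD p D a b = 1)

/-- Auxiliary: an interval of length `n` in step `D` starting at `s`. -/
def Iap (p D : ℕ) (s : ZMod p) (n : ℕ) : Finset (ZMod p) :=
  (Finset.range n).image (fun j : ℕ => s + (j : ZMod p) * (D : ZMod p))

lemma dAP_eq_Iap (p D b : ℕ) : dAP p D b = Iap p D b ((p - 1 - b) / D + 1) := by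
  unfold dAP Iap
  apply Finset.image_congr
  intro i _
  push_cast
  ring

lemma Iap_add (p D : ℕ) (s t : ZMod p) (n n' : ℕ) (hn : 1 ≤ n) (hn' : 1 ≤ n') :
    Iap p D s n + Iap p D t n' = Iap p D (s + t) (n + n' - 1) := by
  ext x
  simp only [Finset.mem_add, Iap, Finset.mem_image, Finset.mem_range]
  constructor
  · rintro ⟨a, ⟨i, hi, rfl⟩, b, ⟨j, hj, rfl⟩, rfl⟩
    exact ⟨i + j, by omega, by push_cast; ring⟩
  · rintro ⟨j, hj, rfl⟩
    obtain ⟨i1, i2, h1, h2, h3⟩ : ∃ i1 i2, i1 < n ∧ i2 < n' ∧ i1 + i2 = j :=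
      ⟨min j (n-1), j - min j (n-1), by omega, by omega, by omega⟩
    refine ⟨s + (i1 : ℕ) * D, ⟨i1, h1, rfl⟩, t + (i2 : ℕ) * D, ⟨i2, h2, rfl⟩, ?_⟩
    rw [← h3]
    push_cast
    ring

lemma Iap_mod (p D : ℕ) [NeZero p] (s : ZMod p) (n : ℕ) :
    Iap p D s n = Iap p D s (min n p) := by
  apply Finset.Subset.antisymm
  · intro x hx
    simp only [Iap, Finset.mem_image, Finset.mem_range] at hx ⊢
    obtain ⟨j, hj, rfl⟩ := hx
    have hp : 0 < p := Nat.pos_of_ne_zero (NeZero.ne p)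
    have h1 := Nat.mod_lt j hp
    have h2 := Nat.mod_le j p
    refine ⟨j % p, by omega, ?_⟩
    rw [ZMod.natCast_mod]
  · apply Finset.image_subset_image
    exact Finset.range_subset_range.2 (min_le_left _ _)

lemma Iap_contig (p : ℕ) [Fact p.Prime] (D : ℕ) (hD1 : 1 ≤ D) (hDp : D < p)
    (s : ZMod p) (n : ℕ) (hn : 1 ≤ n) (hnp : n ≤ p) :
    Contiguous p D (Iap p D s n) := by
  have hp1 : 1 < p := (Fact.out : p.Prime).one_lt
  have hD0 : (D : ZMod p) ≠ 0 := by
    rw [Ne, ZMod.natCast_eq_zero_iff]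
    exact fun h => by have := Nat.le_of_dvd (by omega) h; omega
  refine ⟨(List.range n).map (fun j : ℕ => s + (j : ZMod p) * (D : ZMod p)), ?_, ?_, ?_⟩
  · refine (List.nodup_range (n := n)).map_on ?_
    intro i hi j hj h
    simp only [List.mem_range] at hi hj
    have : (i : ZMod p) = (j : ZMod p) := by
      have := add_left_cancel h
      exact mul_right_cancel₀ hD0 this
    calc i = (i : ZMod p).val := (ZMod.val_cast_of_lt (by omega)).symm
    _ = (j : ZMod p).val := by rw [this]
    _ = j := ZMod.val_cast_of_lt (by omega)
  · ext x
    simp [Iap]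
  · obtain ⟨m, rfl⟩ : ∃ m, n = m + 1 := ⟨n - 1, by omega⟩
    show List.IsChain _ _
    rw [List.isChain_map, List.isChain_range_succ]
    intro i hi
    have hDinv : (D : ZMod p) * (D : ZMod p)⁻¹ = 1 :=
      ZMod.mul_inv_of_unit _ (Ne.isUnit hD0)
    show distPD p D (s + (i : ZMod p) * D) (s + ((i+1 : ℕ) : ZMod p) * D) = 1
    have key : (s + ((i+1 : ℕ) : ZMod p) * D) - (s + (i : ZMod p) * D) = (D : ZMod p) := by
      push_cast; ring
    have key2 : (s + (i : ZMod p) * D) - (s + ((i+1 : ℕ) : ZMod p) * D) = -(D : ZMod p) := by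
      push_cast; ring
    unfold distPD
    rw [key, key2, hDinv, neg_mul, hDinv, ZMod.val_one]
    have hne : (-1 : ZMod p) ≠ 0 := by simp [neg_eq_zero]
    have : (-1 : ZMod p).val ≠ 0 := by rwa [Ne, ZMod.val_eq_zero]
    omega

lemma sum_Iap (p D : ℕ) : ∀ (k : ℕ) (A : Fin k → Finset (ZMod p)),
    (∀ i, ∃ s n, 1 ≤ n ∧ A i = Iap p D s n) →
    ∃ s n, 1 ≤ n ∧ ∑ i, A i = Iap p D s n := by
  intro k
  induction k with
  | zero =>
    intro A _
    refine ⟨0, 1, le_refl 1, ?_⟩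
    simp only [Finset.univ_eq_empty, Finset.sum_empty]
    ext x; simp [Iap]
  | succ k ih =>
    intro A hA
    obtain ⟨s0, n0, hn0, h0⟩ := hA 0
    obtain ⟨s, n, hn, hsum⟩ := ih (fun i => A i.succ) (fun i => hA i.succ)
    rw [Fin.sum_univ_succ, h0, hsum, Iap_add p D _ _ _ _ hn0 hn]
    exact ⟨s0 + s, n0 + n - 1, by omega, rfl⟩

/-- The sumset of `D`-APs `A 1, …, A k ⊆ ℤ_p` is contiguous relative to `D`. -/
theorem sumset_of_dAPs_contiguous (p : ℕ) [Fact p.Prime] (D : ℕ)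
    (hD1 : 1 ≤ D) (hDp : D < p)
    (k : ℕ) (A : Fin k → Finset (ZMod p)) (hA : ∀ i, ∃ b < D, A i = dAP p D b) :
    Contiguous p D (∑ i, A i) := by
  have hp1 : 1 < p := (Fact.out : p.Prime).one_lt
  obtain ⟨s, n, hn, hsum⟩ := sum_Iap p D k A (fun i => by
    obtain ⟨b, _, hb⟩ := hA i
    exact ⟨(b : ZMod p), (p - 1 - b) / D + 1, Nat.le_add_left 1 _, by rw [hb, dAP_eq_Iap]⟩)
  rw [hsum, Iap_mod]
  exact Iap_contig p D hD1 hDp s (min n p) (by omega) (min_le_right _ _)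
end

section
/- Let p be a prime, D an integer with 1 ≤ D < p, and let A_1, …, A_k be D-APs in Z_p. For any g_0, g_1 ∈ Z_p, if dist_{p,D}(g_0, g_1) ≥ |Σ_{i=1}^k A_i|, then g_0 and g_1 are not both contained in Σ_{i=1}^k A_i. -/
open Pointwise

lemma ap_add_ap (p D : ℕ) (c₁ c₂ : ZMod p) (m₁ m₂ : ℕ) :
    (Finset.range (m₁ + 1)).image (fun j : ℕ => c₁ + (j : ZMod p) * D)
      + (Finset.range (m₂ + 1)).image (fun j : ℕ => c₂ + (j : ZMod p) * D)
    = (Finset.range (m₁ + m₂ + 1)).image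
        (fun j : ℕ => (c₁ + c₂) + (j : ZMod p) * D) := by
  ext x
  simp only [Finset.mem_add, Finset.mem_image, Finset.mem_range]
  constructor
  · rintro ⟨y, ⟨j₁, hj₁, rfl⟩, z, ⟨j₂, hj₂, rfl⟩, rfl⟩
    exact ⟨j₁ + j₂, by omega, by push_cast; ring⟩
  · rintro ⟨j, hj, rfl⟩
    refine ⟨c₁ + ((min j m₁ : ℕ) : ZMod p) * D, ⟨min j m₁, by omega, rfl⟩,
      c₂ + ((j - min j m₁ : ℕ) : ZMod p) * D, ⟨j - min j m₁, by omega, rfl⟩, ?_⟩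
    have h : ((min j m₁ : ℕ) : ZMod p) + ((j - min j m₁ : ℕ) : ZMod p)
        = (j : ZMod p) := by
      rw [← Nat.cast_add]; congr 1; omega
    linear_combination (D : ZMod p) * h

lemma sum_struct (p D : ℕ) : ∀ (k : ℕ) (A : Fin k → Finset (ZMod p)),
    (∀ i, ∃ (c : ZMod p) (m : ℕ),
      A i = (Finset.range (m + 1)).image (fun j : ℕ => c + (j : ZMod p) * D)) →
    ∃ (c : ZMod p) (m : ℕ),
      ∑ i, A i = (Finset.range (m + 1)).image (fun j : ℕ => c + (j : ZMod p) * D) := by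
  intro k
  induction k with
  | zero =>
      intro A _
      refine ⟨0, 0, ?_⟩
      ext x
      simp [Finset.mem_zero, eq_comm]
  | succ n ih =>
      intro A hA
      obtain ⟨c₁, m₁, h₁⟩ := hA 0
      obtain ⟨c₂, m₂, h₂⟩ := ih (fun i => A i.succ) (fun i => hA i.succ)
      refine ⟨c₁ + c₂, m₁ + m₂, ?_⟩
      rw [Fin.sum_univ_succ, h₁, h₂, ap_add_ap]

lemma range_reduce (p : ℕ) [Fact p.Prime] (D : ℕ) (c : ZMod p) (m : ℕ) :
    (Finset.range (m + 1)).image (fun j : ℕ => c + (j : ZMod p) * D)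
    = (Finset.range (min (m + 1) p)).image (fun j : ℕ => c + (j : ZMod p) * D) := by
  have hp : 0 < p := (Fact.out : p.Prime).pos
  apply Finset.Subset.antisymm
  · intro x hx
    simp only [Finset.mem_image, Finset.mem_range] at hx ⊢
    obtain ⟨j, hj, rfl⟩ := hx
    have h2 : j % p ≤ j := Nat.mod_le j p
    have h3 : j % p < p := Nat.mod_lt _ hp
    refine ⟨j % p, by omega, by simp [ZMod.natCast_mod]⟩
  · exact Finset.image_subset_image (Finset.range_subset_range.mpr (min_le_left _ _))

/-- If `dist_{p,D}(g₀, g₁) ≥ |A 1 + ⋯ + A k|` for `D`-APs `A 1, …, A k ⊆ ℤ_p`,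
then `g₀` and `g₁` cannot both lie in the sumset `A 1 + ⋯ + A k`. -/
theorem not_both_mem_sumset_of_dAPs (p : ℕ) [Fact p.Prime] (D : ℕ)
    (hD1 : 1 ≤ D) (hDp : D < p)
    (k : ℕ) (A : Fin k → Finset (ZMod p)) (hA : ∀ i, ∃ b < D, A i = dAP p D b)
    (g₀ g₁ : ZMod p) (hdist : (∑ i, A i).card ≤ distPD p D g₀ g₁) :
    ¬(g₀ ∈ ∑ i, A i ∧ g₁ ∈ ∑ i, A i) := by
  rintro ⟨h₀, h₁⟩
  have hA' : ∀ i, ∃ (c : ZMod p) (m : ℕ),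
      A i = (Finset.range (m + 1)).image (fun j : ℕ => c + (j : ZMod p) * D) := by
    intro i
    obtain ⟨b, _, hb⟩ := hA i
    refine ⟨(b : ZMod p), (p - 1 - b) / D, ?_⟩
    rw [hb, dAP]
    apply Finset.image_congr
    intro j _
    push_cast
    ring
  obtain ⟨c, m, hS⟩ := sum_struct p D k A hA'
  set n := min (m + 1) p with hn
  have hSn : ∑ i, A i = (Finset.range n).image (fun j : ℕ => c + (j : ZMod p) * D) :=
    hS.trans (range_reduce p D c m)
  have hDne : (D : ZMod p) ≠ 0 := by
    intro h
    rw [ZMod.natCast_eq_zero_iff] at h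
    exact absurd (Nat.le_of_dvd (by omega) h) (by omega)
  have hnp : n ≤ p := min_le_right _ _
  have hinj : Set.InjOn (fun j : ℕ => c + (j : ZMod p) * D)
      (Finset.range n : Finset ℕ) := by
    intro j hj j' hj' h
    simp only [Finset.coe_range, Set.mem_Iio] at hj hj'
    have h1 : (j : ZMod p) * D = (j' : ZMod p) * D := by
      have := h; simpa using add_left_cancel this
    have h2 : (j : ZMod p) = (j' : ZMod p) := mul_right_cancel₀ hDne h1
    have := congrArg ZMod.val h2
    rwa [ZMod.val_cast_of_lt (by omega), ZMod.val_cast_of_lt (by omega)] at this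
  have hcard : (∑ i, A i).card = n := by
    rw [hSn, Finset.card_image_of_injOn hinj, Finset.card_range]
  rw [hSn] at h₀ h₁
  simp only [Finset.mem_image, Finset.mem_range] at h₀ h₁
  obtain ⟨s, hs, hgs⟩ := h₀
  obtain ⟨t, ht, hgt⟩ := h₁
  rw [hcard] at hdist
  rcases le_or_gt s t with hst | hst
  · have hkey : (g₁ - g₀) * (D : ZMod p)⁻¹ = ((t - s : ℕ) : ZMod p) := by
      rw [← hgs, ← hgt, Nat.cast_sub hst]
      field_simp
      ring
    have hval : ((g₁ - g₀) * (D : ZMod p)⁻¹).val = t - s := by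
      rw [hkey, ZMod.val_cast_of_lt (by omega)]
    have := le_trans hdist (min_le_left _ _)
    rw [hval] at this
    omega
  · have hkey : (g₀ - g₁) * (D : ZMod p)⁻¹ = ((s - t : ℕ) : ZMod p) := by
      rw [← hgs, ← hgt, Nat.cast_sub hst.le]
      field_simp
      ring
    have hval : ((g₀ - g₁) * (D : ZMod p)⁻¹).val = s - t := by
      rw [hkey, ZMod.val_cast_of_lt (by omega)]
    have := le_trans hdist (min_le_right _ _)
    rw [hval] at this
    omega
end

section
/- Let p > 5 be a prime and k a positive integer with k < p/4, and set D = ⌈2kp/(p−3)⌉. Then D < p, and for any D-APs A_1, …, A_k ⊆ Z_p, the sumset satisfies |Σ_{i=1}^k A_i| ≤ (p−1)/2. -/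
open Pointwise

lemma add_subset_apimg (p D : ℕ) {A B : Finset (ZMod p)} {a b m n : ℕ}
    (hA : A ⊆ (Finset.range (m + 1)).image (fun j => ((a + j * D : ℕ) : ZMod p)))
    (hB : B ⊆ (Finset.range (n + 1)).image (fun j => ((b + j * D : ℕ) : ZMod p))) :
    A + B ⊆ (Finset.range (m + n + 1)).image (fun j => ((a + b + j * D : ℕ) : ZMod p)) := by
  intro x hx
  obtain ⟨y, hy, z, hz, rfl⟩ := Finset.mem_add.1 hx
  obtain ⟨i, hi, rfl⟩ := Finset.mem_image.1 (hA hy)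
  obtain ⟨j, hj, rfl⟩ := Finset.mem_image.1 (hB hz)
  rw [Finset.mem_range] at hi hj
  refine Finset.mem_image.2 ⟨i + j, Finset.mem_range.2 (by omega), ?_⟩
  push_cast
  ring

lemma sum_subset_apimg (p D : ℕ) : ∀ (k : ℕ) (A : Fin k → Finset (ZMod p))
    (a m : Fin k → ℕ),
    (∀ i, A i ⊆ (Finset.range (m i + 1)).image (fun j => ((a i + j * D : ℕ) : ZMod p))) →
    (∑ i, A i) ⊆ (Finset.range ((∑ i, m i) + 1)).image
      (fun j => (((∑ i, a i) + j * D : ℕ) : ZMod p)) := by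
  intro k
  induction k with
  | zero =>
    intro A a m _
    simp
    exact Or.inr rfl
  | succ n ih =>
    intro A a m h
    rw [Fin.sum_univ_succ (f := A), Fin.sum_univ_succ (f := m), Fin.sum_univ_succ (f := a)]
    have := add_subset_apimg p D (h 0)
      (ih (fun i => A i.succ) (fun i => a i.succ) (fun i => m i.succ) (fun i => h i.succ))
    exact this

/-- For a prime `p > 5`, a positive integer `k < p/4`, and `D = ⌈2kp/(p − 3)⌉`:
`D < p`, and any `k` `D`-APs `A 1, …, A k ⊆ ℤ_p` satisfy
`|A 1 + ⋯ + A k| ≤ (p − 1)/2`. -/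
theorem sumset_card_le_half (p : ℕ) [Fact p.Prime] (hp : 5 < p)
    (k : ℕ) (hk : 0 < k) (hkp : 4 * k < p)
    (D : ℕ) (hD : D = ⌈(2 * k * p : ℚ) / ((p : ℚ) - 3)⌉₊) :
    D < p ∧
    ∀ A : Fin k → Finset (ZMod p), (∀ i, ∃ b < D, A i = dAP p D b) →
      (∑ i, A i).card ≤ (p - 1) / 2 := by
  have hp3 : (0 : ℚ) < (p : ℚ) - 3 := by
    have : (5 : ℚ) < p := by exact_mod_cast hp
    linarith
  -- D ≥ 1
  have hDpos : 0 < D := by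
    rw [hD]
    apply Nat.ceil_pos.2
    apply div_pos _ hp3
    positivity
  -- key inequality : 2 k p ≤ D * (p - 3)
  have hkey : 2 * k * p ≤ D * (p - 3) := by
    have h1 : (2 * k * p : ℚ) / ((p : ℚ) - 3) ≤ D := by rw [hD]; exact Nat.le_ceil _
    have h2 : (2 * k * p : ℚ) ≤ D * ((p : ℚ) - 3) := by
      rw [div_le_iff₀ hp3] at h1; linarith
    have h3 : ((p : ℚ) - 3) = ((p - 3 : ℕ) : ℚ) := by
      have : 3 ≤ p := by omega
      push_cast [this]; ring
    rw [h3] at h2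
    exact_mod_cast h2
  -- D < p
  have hDp : D < p := by
    have h4 : (2 * k * p : ℚ) ≤ ((p - 1 : ℕ) : ℚ) * ((p : ℚ) - 3) := by
      have h7 : 2 * k * p ≤ (p - 1) * (p - 3) := by
        obtain ⟨m, rfl⟩ : ∃ m, p = m + 6 := ⟨p - 6, by omega⟩
        have e1 : m + 6 - 1 = m + 5 := by omega
        have e2 : m + 6 - 3 = m + 3 := by omega
        rw [e1, e2]
        have h6 : 4 * k ≤ m + 5 := by omega
        nlinarith
      have h8 : ((p : ℚ) - 3) = ((p - 3 : ℕ) : ℚ) := by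
        have : 3 ≤ p := by omega
        push_cast [this]; ring
      rw [h8]
      exact_mod_cast h7
    have h9 : D ≤ p - 1 := by
      rw [hD]
      apply Nat.ceil_le.2
      rw [div_le_iff₀ hp3]
      exact h4
    omega
  refine ⟨hDp, ?_⟩
  intro A hA
  choose b hb hAb using hA
  set m : Fin k → ℕ := fun i => (p - 1 - b i) / D with hm
  have hsub : (∑ i, A i) ⊆ (Finset.range ((∑ i, m i) + 1)).image
      (fun j => (((∑ i, b i) + j * D : ℕ) : ZMod p)) := by
    apply sum_subset_apimg
    intro i
    rw [hAb i]
    exact subset_rfl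
  have hcard : (∑ i, A i).card ≤ (∑ i, m i) + 1 := by
    calc (∑ i, A i).card ≤ _ := Finset.card_le_card hsub
      _ ≤ (Finset.range ((∑ i, m i) + 1)).card := Finset.card_image_le
      _ = (∑ i, m i) + 1 := Finset.card_range _
  -- bound each m i by (p-1)/D
  have hmi : ∀ i, m i ≤ (p - 1) / D := by
    intro i
    exact Nat.div_le_div_right (by omega)
  have hsum : (∑ i, m i) ≤ k * ((p - 1) / D) := by
    calc (∑ i, m i) ≤ ∑ _i : Fin k, ((p - 1) / D) := Finset.sum_le_sum (fun i _ => hmi i)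
      _ = k * ((p - 1) / D) := by simp [Finset.sum_const, mul_comm]
  -- arithmetic: k * ((p-1)/D) + 1 ≤ (p-1)/2
  set f := (p - 1) / D with hf
  have hDf : D * f ≤ p - 1 := by rw [hf, mul_comm]; exact Nat.div_mul_le_self _ _
  have harith : k * f + 1 ≤ (p - 1) / 2 := by
    apply Nat.le_div_iff_mul_le (by norm_num) |>.2
    -- (k*f + 1) * 2 ≤ p - 1; show via multiplying by D
    have hmain : D * ((k * f + 1) * 2) ≤ D * (p - 1) := by
      have e1 : D * ((k * f + 1) * 2) = 2 * k * (D * f) + 2 * D := by ring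
      have e2 : 2 * k * (D * f) ≤ 2 * k * (p - 1) := Nat.mul_le_mul_left _ hDf
      have e3 : 2 * k * (p - 1) ≤ 2 * k * p := Nat.mul_le_mul_left _ (by omega)
      have e4 : D * (p - 3) + 2 * D = D * (p - 1) := by
        have : p - 3 + 2 = p - 1 := by omega
        rw [← this]; ring
      omega
    exact Nat.le_of_mul_le_mul_left hmain hDpos
  omega
end

section
/- Let p > 5 be a prime, k a positive integer with k < p/4, and g_0 ≠ g_1 elements of Z_p. Set D = ⌈2kp/(p−3)⌉ and c = ((p−1)/2)·D·(g_1 − g_0)^{−1} mod p. For any x_1, …, x_k ∈ Z_p, let b_i = ((c·x_i) mod p) mod D and let A_{(b_i)} be the D-AP in Z_p with base b_i. Then: (i) if x_1 + ⋯ + x_k = g_0 in Z_p, then c·g_0 mod p ∈ Σ_{i=1}^k A_{(b_i)}; and (ii) if x_1 + ⋯ + x_k = g_1 in Z_p, then c·g_0 mod p ∉ Σ_{i=1}^k A_{(b_i)}. -/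
open Pointwise

/-- Correctness of the deterministic one-round Sum-Dist protocol over `ℤ_p`:
with `D = ⌈2kp/(p − 3)⌉`, `c = ((p − 1)/2)·D·(g₁ − g₀)⁻¹`, and each party
sending `b_i = ((c·x_i) mod p) mod D`, the coordinator's test
"`c·g₀ ∈ Σ_i A_{(b_i)}`" holds iff the inputs sum to `g₀` (under the promise). -/
theorem sumDist_protocol_correct (p : ℕ) [Fact p.Prime] (hp : 5 < p)
    (k : ℕ) (hk : 0 < k) (hkp : 4 * k < p)
    (g₀ g₁ : ZMod p) (hg : g₀ ≠ g₁)
    (D : ℕ) (hD : D = ⌈(2 * k * p : ℚ) / ((p : ℚ) - 3)⌉₊)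
    (c : ZMod p) (hc : c = (((p - 1) / 2 : ℕ) : ZMod p) * (D : ZMod p) * (g₁ - g₀)⁻¹)
    (x : Fin k → ZMod p) :
    ((∑ i, x i) = g₀ → c * g₀ ∈ ∑ i, dAP p D ((c * x i).val % D)) ∧
    ((∑ i, x i) = g₁ → c * g₀ ∉ ∑ i, dAP p D ((c * x i).val % D)) := by
  have hprime : p.Prime := Fact.out
  have hp6 : p ≠ 6 := by intro h; rw [h] at hprime; norm_num at hprime
  have hp7 : 7 ≤ p := by omega
  have hodd : p % 2 = 1 := Nat.odd_iff.mp (hprime.odd_of_ne_two (by omega))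
  set h : ℕ := (p - 1) / 2 with hh
  have h2h : 2 * h = p - 1 := by omega
  -- D facts
  have hq3 : (0:ℚ) < (p:ℚ) - 3 := by
    have : (7:ℚ) ≤ (p:ℚ) := by exact_mod_cast hp7
    linarith
  have hDineq : 2 * k * p ≤ D * (p - 3) := by
    have h1 : ((2 * k * p : ℚ)) / ((p:ℚ) - 3) ≤ (D : ℚ) := by
      rw [hD]; exact Nat.le_ceil _
    rw [div_le_iff₀ hq3] at h1
    have h2 : ((p:ℚ) - 3) = ((p - 3 : ℕ) : ℚ) := by
      have : (3:ℕ) ≤ p := by omega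
      push_cast [Nat.cast_sub this]; ring
    rw [h2] at h1
    exact_mod_cast h1
  have hDpos : 0 < D := by
    rcases Nat.eq_zero_or_pos D with h0 | h0
    · rw [h0] at hDineq; simp at hDineq; omega
    · exact h0
  have hDltp : D < p := by
    have hle : D ≤ p - 1 := by
      rw [hD, Nat.ceil_le]
      rw [div_le_iff₀ hq3]
      have hnat : 2 * (2 * k * p) ≤ 2 * ((p-1) * (p-3)) := by
        have hs1 : p - 1 = (p - 7) + 6 := by omega
        have hs3 : p - 3 = (p - 7) + 4 := by omega
        have hs7 : p = (p - 7) + 7 := by omega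
        rw [hs1, hs3]
        nlinarith [hkp, hs7]
      have : (2 * k * p : ℚ) ≤ ((p-1 : ℕ) : ℚ) * ((p - 3 :ℕ) : ℚ) := by
        exact_mod_cast by omega
      calc (2 * ↑k * ↑p : ℚ) ≤ ((p-1 : ℕ) : ℚ) * ((p - 3 :ℕ) : ℚ) := by push_cast at this ⊢; linarith
        _ = ((p-1 : ℕ) : ℚ) * ((p:ℚ) - 3) := by
            congr 1
            push_cast [Nat.cast_sub (show (3:ℕ) ≤ p by omega)]; ring
    omega
  have hpD : ¬ p ∣ D := fun hd => absurd (Nat.le_of_dvd hDpos hd) (by omega)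
  have hgcd : Nat.gcd p D = 1 := (Nat.Prime.coprime_iff_not_dvd hprime).mpr hpD
  -- values
  set y : Fin k → ℕ := fun i => (c * x i).val with hy
  set b : Fin k → ℕ := fun i => y i % D with hb
  have hylt : ∀ i, y i < p := fun i => ZMod.val_lt _
  have hycast : ∀ i, ((y i : ℕ) : ZMod p) = c * x i := fun i => ZMod.natCast_rightInverse _
  -- membership characterization
  have hmemd : ∀ (β : ℕ) (a : ZMod p), a ∈ dAP p D β ↔
      ∃ j, j ≤ (p - 1 - β) / D ∧ a = ((β + j * D : ℕ) : ZMod p) := by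
    intro β a
    simp only [dAP, Finset.mem_image, Finset.mem_range, Nat.lt_add_one_iff]
    constructor
    · rintro ⟨j, hj, rfl⟩; exact ⟨j, hj, rfl⟩
    · rintro ⟨j, hj, rfl⟩; exact ⟨j, hj, rfl⟩
  -- each c * x i belongs to its dAP
  have hself : ∀ i, c * x i ∈ dAP p D (b i) := by
    intro i
    rw [hmemd]
    refine ⟨y i / D, ?_, ?_⟩
    · rw [Nat.le_div_iff_mul_le hDpos]
      have h1 : b i + y i / D * D = y i := by
        simp only [hb]; rw [Nat.mod_add_div']
      have h2 := hylt i
      omega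
    · have : b i + y i / D * D = y i := by
        simp only [hb]; rw [Nat.mod_add_div']
      rw [this, hycast]
  -- key bound : k * ((p-1)/D) < h
  have hfb : k * ((p - 1) / D) < h := by
    by_contra hcon
    push_neg at hcon
    have h1 : ((p - 1) / D) * D ≤ p - 1 := Nat.div_mul_le_self _ _
    have h2 : D * h ≤ D * (k * ((p - 1) / D)) := Nat.mul_le_mul_left _ hcon
    have h3 : D * (k * ((p - 1) / D)) = k * (((p - 1) / D) * D) := by ring
    have h4 : k * (((p - 1) / D) * D) ≤ k * (p - 1) := Nat.mul_le_mul_left _ h1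
    have h5 : D * (p - 3) ≤ D * (p - 1) := Nat.mul_le_mul_left _ (by omega)
    have h6 : D * (p - 1) = 2 * (D * h) := by rw [← h2h]; ring
    have h7 : k * (p - 1) + k = k * p := by rw [← Nat.mul_succ]; congr 1; omega
    nlinarith
  constructor
  · -- completeness
    intro h0
    have hsum : c * g₀ = ∑ i, c * x i := by rw [← h0, Finset.mul_sum]
    rw [hsum, ← Finset.mem_coe, Finset.coe_sum]
    exact Set.finset_sum_mem_finset_sum _ _ _ (fun i _ => hself i)
  · -- soundness
    intro h1 hmem
    rw [← Finset.mem_coe, Finset.coe_sum] at hmem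
    rw [Set.mem_finset_sum] at hmem
    obtain ⟨a, ha, hsum⟩ := hmem
    have hrep : ∀ i : Fin k, ∃ j, j ≤ (p - 1 - b i) / D ∧ a i = ((b i + j * D : ℕ) : ZMod p) := by
      intro i
      exact (hmemd (b i) (a i)).mp (ha (Finset.mem_univ i))
    choose j hjle hja using hrep
    set J : ℕ := ∑ i, j i with hJ
    set L : ℕ := ∑ i, y i / D with hL
    set B : ℕ := ∑ i, b i with hB
    -- bounds on J and L
    have hJb : J ≤ k * ((p - 1) / D) := by
      rw [hJ]
      calc ∑ i, j i ≤ ∑ _i : Fin k, (p - 1) / D := by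
            apply Finset.sum_le_sum
            intro i _
            exact le_trans (hjle i) (Nat.div_le_div_right (by omega))
        _ = k * ((p - 1) / D) := by simp [Finset.sum_const, mul_comm]
    have hLb : L ≤ k * ((p - 1) / D) := by
      rw [hL]
      calc ∑ i, y i / D ≤ ∑ _i : Fin k, (p - 1) / D := by
            apply Finset.sum_le_sum
            intro i _
            exact Nat.div_le_div_right (by have := hylt i; omega)
        _ = k * ((p - 1) / D) := by simp [Finset.sum_const, mul_comm]
    -- cast identities
    have hS : ((B + J * D : ℕ) : ZMod p) = c * g₀ := by
      have hnat : ∑ i, (b i + j i * D) = B + J * D := by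
        rw [Finset.sum_add_distrib, ← Finset.sum_mul]
      rw [← hsum, ← hnat, Nat.cast_sum]
      exact Finset.sum_congr rfl (fun i _ => (hja i).symm)
    have hT : ((B + L * D : ℕ) : ZMod p) = c * g₁ := by
      have hnat : ∑ i, (b i + y i / D * D) = B + L * D := by
        rw [Finset.sum_add_distrib, ← Finset.sum_mul]
      have hyi : ∀ i : Fin k, b i + y i / D * D = y i := by
        intro i; simp only [hb]; rw [Nat.mod_add_div']
      rw [← h1, Finset.mul_sum, ← hnat, Nat.cast_sum]
      apply Finset.sum_congr rfl
      intro i _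
      rw [hyi i, hycast i]
    -- the shift identity
    have hg10 : g₁ - g₀ ≠ 0 := sub_ne_zero.mpr (Ne.symm hg)
    have hshift : c * g₀ + (h : ZMod p) * (D : ZMod p) = c * g₁ := by
      have hcd : c * (g₁ - g₀) = (h : ZMod p) * (D : ZMod p) := by
        rw [hc]; field_simp
      linear_combination -hcd
    -- combine
    have hkey : ((B + J * D + h * D : ℕ) : ZMod p) = ((B + L * D : ℕ) : ZMod p) := by
      rw [hT]
      push_cast
      push_cast at hS
      linear_combination hS + hshift
    rw [ZMod.natCast_eq_natCast_iff] at hkey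
    have hkey2 : B + (J + h) * D ≡ B + L * D [MOD p] := by
      have : B + J * D + h * D = B + (J + h) * D := by ring
      rwa [this] at hkey
    have hkey3 : (J + h) * D ≡ L * D [MOD p] := Nat.ModEq.add_left_cancel' B hkey2
    have hkey4 : J + h ≡ L [MOD p] := Nat.ModEq.cancel_right_of_coprime hgcd hkey3
    have hJhlt : J + h < p := by omega
    have hLlt : L < p := by omega
    have : J + h = L := hkey4.eq_of_lt_of_lt hJhlt hLlt
    omega
end

section
/- There is a universal constant C such that for every prime p, every positive integer k, and every pair of distinct elements g_0, g_1 ∈ Z_p, there exist a finite message set M with |M| ≤ C·k, encoding functions e_1, …, e_k : Z_p → M, and a decoder dec : M^k → {0,1} such that for all x_1, …, x_k ∈ Z_p: if x_1 + ⋯ + x_k = g_0 in Z_p then dec(e_1(x_1), …, e_k(x_k)) = 0, and if x_1 + ⋯ + x_k = g_1 in Z_p then dec(e_1(x_1), …, e_k(x_k)) = 1. Consequently the total communication complexity k·⌈log_2 |M|⌉ is at most k·log_2 k + C'·k for a universal constant C'. -/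
set_option maxHeartbeats 1000000 in
/-- There is a universal constant `C` such that for every prime `p`, every `k ≥ 1`,
and every pair of distinct `g₀, g₁ ∈ ℤ_p`, there is a one-round deterministic
`k`-party protocol (encoders `e_i : ℤ_p → M`, decoder `dec : M^k → {0,1}`) with
message set `M` of size at most `C·k` that solves Sum-Dist relative to `g₀, g₁`;
consequently its total communication `k·⌈log₂ |M|⌉` is at most
`k·log₂ k + C'·k` for a universal constant `C'`. -/
theorem sumDist_upper_bound :
    ∃ (C : ℕ) (C' : ℝ), 0 < C ∧
      ∀ (p : ℕ), p.Prime → ∀ (k : ℕ), 0 < k → ∀ g₀ g₁ : ZMod p, g₀ ≠ g₁ →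
        ∃ (m : ℕ) (e : Fin k → ZMod p → Fin m) (dec : (Fin k → Fin m) → Fin 2),
          0 < m ∧ m ≤ C * k ∧
          (∀ x : Fin k → ZMod p,
            ((∑ i, x i) = g₀ → dec (fun i => e i (x i)) = 0) ∧
            ((∑ i, x i) = g₁ → dec (fun i => e i (x i)) = 1)) ∧
          ((k * Nat.clog 2 m : ℕ) : ℝ) ≤ k * Real.logb 2 k + C' * k := by
  classical
  refine ⟨8, 4, by norm_num, ?_⟩
  intro p hp k hk g₀ g₁ hne
  haveI : Fact p.Prime := ⟨hp⟩
  haveI : Nonempty (Fin k) := ⟨⟨0, hk⟩⟩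
  have hppos : 0 < p := hp.pos
  have hk4 : 0 < 4 * k := by omega
  set u : ZMod p := (g₁ - g₀)⁻¹ with hu
  have hud : u * (g₁ - g₀) = 1 := inv_mul_cancel₀ (sub_ne_zero.mpr (Ne.symm hne))
  set n : ZMod p → ℕ := fun x => (u * x).val with hn
  set a : ZMod p → ℕ := fun x => n x * (4 * k) / p with ha
  have hAl : ∀ y : ZMod p, a y * p ≤ n y * (4 * k) := fun y =>
    Nat.div_mul_le_self (n y * (4 * k)) p
  have hAu : ∀ y : ZMod p, n y * (4 * k) < (a y + 1) * p := by
    intro y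
    simp only [ha]
    have h2 := Nat.mod_lt (n y * (4 * k)) hppos
    calc n y * (4 * k) = p * (n y * (4 * k) / p) + n y * (4 * k) % p :=
          (Nat.div_add_mod (n y * (4 * k)) p).symm
    _ < p * (n y * (4 * k) / p) + p := Nat.add_lt_add_left h2 _
    _ = (n y * (4 * k) / p + 1) * p := by ring
  have ha_lt : ∀ y : ZMod p, a y < 4 * k := by
    intro y
    have h1 : n y < p := ZMod.val_lt (u * y)
    have h2 : n y * (4 * k) < p * (4 * k) := by
      exact Nat.mul_lt_mul_of_lt_of_le h1 le_rfl hk4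
    simp only [ha]
    rw [Nat.div_lt_iff_lt_mul hppos]
    calc n y * (4 * k) < p * (4 * k) := h2
    _ = 4 * k * p := by ring
  have henc : ∀ y : ZMod p, a y * 2 + n y % 2 < 8 * k := by
    intro y
    have := ha_lt y
    have h2 : n y % 2 < 2 := Nat.mod_lt _ (by norm_num)
    omega
  set enc : ZMod p → Fin (8 * k) := fun y => ⟨a y * 2 + n y % 2, henc y⟩ with he
  -- the cast fact : (n y : ZMod p) = u * y
  have hcast1 : ∀ y : ZMod p, ((n y : ℕ) : ZMod p) = u * y := fun y =>
    ZMod.natCast_rightInverse (u * y)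
  refine ⟨8 * k, fun _ => enc,
    fun msg => if ∃ x : Fin k → ZMod p, (∀ i, enc (x i) = msg i) ∧ (∑ i, x i) = g₁
      then 1 else 0,
    by omega, le_rfl, ?_, ?_⟩
  · intro x
    constructor
    · intro h0
      have hno : ¬ ∃ x' : Fin k → ZMod p,
          (∀ i, enc (x' i) = enc (x i)) ∧ (∑ i, x' i) = g₁ := by
        rintro ⟨x', hxe, hx1⟩
        -- per-coordinate equalities
        have hkey : ∀ i, a (x' i) = a (x i) ∧ n (x' i) % 2 = n (x i) % 2 := by
          intro i
          have h := congrArg Fin.val (hxe i)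
          simp only [he] at h
          have r1 : n (x' i) % 2 < 2 := Nat.mod_lt _ (by norm_num)
          have r2 : n (x i) % 2 < 2 := Nat.mod_lt _ (by norm_num)
          omega
        set N : ℕ := ∑ i, n (x i) with hN
        set N' : ℕ := ∑ i, n (x' i) with hN'
        set A : ℕ := ∑ i, a (x i) with hA
        have hA' : (∑ i, a (x' i)) = A := Finset.sum_congr rfl (fun i _ => (hkey i).1)
        have h2 : A * p ≤ N * (4 * k) := by
          calc A * p = ∑ i, a (x i) * p := by rw [Finset.sum_mul]
          _ ≤ ∑ i, n (x i) * (4 * k) := Finset.sum_le_sum (fun i _ => hAl _)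
          _ = N * (4 * k) := by rw [Finset.sum_mul]
        have h3 : N * (4 * k) < (A + k) * p := by
          calc N * (4 * k) = ∑ i, n (x i) * (4 * k) := by rw [Finset.sum_mul]
          _ < ∑ i, (a (x i) + 1) * p :=
            Finset.sum_lt_sum_of_nonempty Finset.univ_nonempty (fun i _ => hAu _)
          _ = (A + k) * p := by
            rw [← Finset.sum_mul]
            congr 1
            rw [Finset.sum_add_distrib]
            simp [hA]
        have h4 : A * p ≤ N' * (4 * k) := by
          calc A * p = ∑ i, a (x' i) * p := by rw [← hA', Finset.sum_mul]
          _ ≤ ∑ i, n (x' i) * (4 * k) := Finset.sum_le_sum (fun i _ => hAl _)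
          _ = N' * (4 * k) := by rw [Finset.sum_mul]
        have h5 : N' * (4 * k) < (A + k) * p := by
          calc N' * (4 * k) = ∑ i, n (x' i) * (4 * k) := by rw [Finset.sum_mul]
          _ < ∑ i, (a (x' i) + 1) * p :=
            Finset.sum_lt_sum_of_nonempty Finset.univ_nonempty (fun i _ => hAu _)
          _ = (A + k) * p := by
            rw [← Finset.sum_mul]
            congr 1
            rw [Finset.sum_add_distrib, hA']
            simp
        have hpar : N % 2 = N' % 2 := by
          have hsum : (∑ i, n (x i) % 2) = (∑ i, n (x' i) % 2) :=
            Finset.sum_congr rfl (fun i _ => ((hkey i).2).symm)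
          rw [hN, hN', Finset.sum_nat_mod, hsum, ← Finset.sum_nat_mod]
        have hcastN : ((N : ℕ) : ZMod p) = u * g₀ := by
          rw [hN]
          push_cast
          rw [Finset.sum_congr rfl (fun i _ => hcast1 (x i)), ← Finset.mul_sum, h0]
        have hcastN' : ((N' : ℕ) : ZMod p) = u * g₁ := by
          rw [hN']
          push_cast
          rw [Finset.sum_congr rfl (fun i _ => hcast1 (x' i)), ← Finset.mul_sum, hx1]
        have hD : (((N' : ℤ) - N - 1 : ℤ) : ZMod p) = 0 := by
          push_cast
          rw [hcastN, hcastN']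
          linear_combination hud
        have hdvd : (p : ℤ) ∣ ((N' : ℤ) - N - 1) :=
          (ZMod.intCast_zmod_eq_zero_iff_dvd _ p).mp hD
        obtain ⟨m, hm⟩ := hdvd
        -- cast inequalities to ℤ
        have e2 : (A : ℤ) * p ≤ (N : ℤ) * (4 * k) := by exact_mod_cast h2
        have e3 : (N : ℤ) * (4 * k) < ((A : ℤ) + k) * p := by exact_mod_cast h3
        have e4 : (A : ℤ) * p ≤ (N' : ℤ) * (4 * k) := by exact_mod_cast h4
        have e5 : (N' : ℤ) * (4 * k) < ((A : ℤ) + k) * p := by exact_mod_cast h5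
        have hkz : (1 : ℤ) ≤ (k : ℤ) := by exact_mod_cast hk
        have hpz : (2 : ℤ) ≤ (p : ℤ) := by exact_mod_cast hp.two_le
        rcases lt_trichotomy m 0 with hm0 | hm0 | hm0
        · -- m ≤ -1 : N ≥ N' + p - 1
          have hpm : (p : ℤ) * m ≤ -p := by
            have h1 : m ≤ -1 := by omega
            nlinarith
          have hge : (N' : ℤ) + p - 1 ≤ (N : ℤ) := by linarith
          have h6 : ((N' : ℤ) + p - 1) * (4 * k) ≤ (N : ℤ) * (4 * k) :=
            mul_le_mul_of_nonneg_right hge (by positivity)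
          nlinarith
        · -- m = 0 : N' = N + 1, contradicts parity
          rw [hm0, mul_zero] at hm
          omega
        · -- m ≥ 1 : N' ≥ N + 1 + p
          have hpm : (p : ℤ) ≤ (p : ℤ) * m := by
            have h1 : (1 : ℤ) ≤ m := by omega
            nlinarith
          have hge : (N : ℤ) + 1 + p ≤ (N' : ℤ) := by linarith
          have h6 : ((N : ℤ) + 1 + p) * (4 * k) ≤ (N' : ℤ) * (4 * k) :=
            mul_le_mul_of_nonneg_right hge (by positivity)
          nlinarith
      exact if_neg hno
    · intro h1
      have hyes : ∃ x' : Fin k → ZMod p,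
          (∀ i, enc (x' i) = enc (x i)) ∧ (∑ i, x' i) = g₁ := ⟨x, fun i => rfl, h1⟩
      exact if_pos hyes
  · -- communication bound
    have hc1 : Nat.clog 2 (8 * k) ≤ Nat.clog 2 k + 3 := by
      rw [Nat.clog_le_iff_le_pow (by norm_num)]
      have hle : k ≤ 2 ^ Nat.clog 2 k := Nat.le_pow_clog (by norm_num) k
      calc 8 * k ≤ 8 * 2 ^ Nat.clog 2 k := by
            exact Nat.mul_le_mul_left 8 hle
      _ = 2 ^ (Nat.clog 2 k + 3) := by rw [pow_add]; ring
    have hc2 : (Nat.clog 2 k : ℝ) ≤ Real.logb 2 k + 1 := by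
      rcases Nat.lt_or_ge k 2 with h2 | h2
      · have hk1 : k = 1 := by omega
        subst hk1
        simp
      · have hcpos : 0 < Nat.clog 2 k := Nat.clog_pos (by norm_num) h2
        have hlt : 2 ^ (Nat.clog 2 k - 1) < k :=
          Nat.pow_pred_clog_lt_self (by norm_num) h2
        have h' : ((2 : ℝ)) ^ (Nat.clog 2 k - 1) ≤ (k : ℝ) := by
          exact_mod_cast hlt.le
        have hlog : ((Nat.clog 2 k - 1 : ℕ) : ℝ) ≤ Real.logb 2 k := by
          calc ((Nat.clog 2 k - 1 : ℕ) : ℝ)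
              = Real.logb 2 ((2 : ℝ) ^ (Nat.clog 2 k - 1)) := by
                rw [Real.logb_pow]
                simp
          _ ≤ Real.logb 2 (k : ℝ) :=
              Real.logb_le_logb_of_le (by norm_num) (by positivity) h'
        have hc : Nat.clog 2 k = (Nat.clog 2 k - 1) + 1 := by omega
        rw [hc]
        push_cast
        push_cast at hlog
        linarith
    have hkR : (0 : ℝ) ≤ (k : ℝ) := by positivity
    have : ((Nat.clog 2 (8 * k)) : ℝ) ≤ Real.logb 2 k + 4 := by
      have : ((Nat.clog 2 (8 * k)) : ℝ) ≤ (Nat.clog 2 k : ℝ) + 3 := by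
        exact_mod_cast hc1
      linarith
    push_cast
    calc (k : ℝ) * (Nat.clog 2 (8 * k) : ℝ) ≤ (k : ℝ) * (Real.logb 2 k + 4) :=
          mul_le_mul_of_nonneg_left this hkR
    _ = k * Real.logb 2 k + 4 * k := by ring
end

section
/- Let p be a prime, k > 1 an integer, and t a nonnegative integer with 2^t ≤ (k−1)/2 and 2^t ≤ p/2. Let A_1, …, A_{k−1} be nonempty subsets of Z_p with |A_i| ≥ p/2^t for each i. Then Σ_{i=1}^{k−1} A_i = Z_p. -/
open Pointwise

lemma sum_finset_nonempty {p : ℕ} {ι : Type*} [DecidableEq ι]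
    (A : ι → Finset (ZMod p)) (hA : ∀ i, (A i).Nonempty)
    (s : Finset ι) (hs : s.Nonempty) : (∑ i ∈ s, A i).Nonempty := by
  induction hs using Finset.Nonempty.cons_induction with
  | singleton i => simpa using hA i
  | cons i s hi hs ih =>
      rw [Finset.sum_cons]
      exact (hA i).add ih

lemma cd_sum {p : ℕ} (hp : p.Prime) {ι : Type*} [DecidableEq ι]
    (A : ι → Finset (ZMod p)) (hA : ∀ i, (A i).Nonempty)
    (s : Finset ι) (hs : s.Nonempty) :
    min p ((∑ i ∈ s, ((A i).card - 1)) + 1) ≤ (∑ i ∈ s, A i).card := by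
  induction hs using Finset.Nonempty.cons_induction with
  | singleton i =>
      simp only [Finset.sum_singleton]
      have h1 : 1 ≤ (A i).card := (hA i).card_pos
      omega
  | cons i s hi hs ih =>
      rw [Finset.sum_cons, Finset.sum_cons]
      have h := ZMod.cauchy_davenport hp (hA i) (sum_finset_nonempty A hA s hs)
      have h1 : 1 ≤ (A i).card := (hA i).card_pos
      omega

/-- Key step of the Sum-Dist lower bound: if `2^t ≤ (k − 1)/2` and `2^t ≤ p/2`,
and `A 1, …, A (k−1)` are nonempty subsets of `ℤ_p` each of size at least
`p/2^t`, then their sumset is all of `ℤ_p`. -/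
theorem sumset_eq_univ_of_large (p : ℕ) [Fact p.Prime] (k : ℕ) (hk : 1 < k)
    (t : ℕ) (ht1 : 2 * 2 ^ t ≤ k - 1) (ht2 : 2 * 2 ^ t ≤ p)
    (A : Fin (k - 1) → Finset (ZMod p)) (hA : ∀ i, (A i).Nonempty)
    (hcard : ∀ i, (p : ℝ) / 2 ^ t ≤ ((A i).card : ℝ)) :
    (∑ i, A i) = Finset.univ := by
  have hp := (Fact.out : p.Prime)
  have hne : (Finset.univ : Finset (Fin (k-1))).Nonempty := by
    have : 0 < k - 1 := by omega
    exact Finset.univ_nonempty_iff.mpr (Fin.pos_iff_nonempty.mp this)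
  have key := cd_sum hp A hA Finset.univ hne
  -- show p ≤ sum of (card - 1)
  have hsum : p ≤ ∑ i, ((A i).card - 1) := by
    have hpow : (0 : ℝ) < 2 ^ t := by positivity
    have hterm : ∀ i, ((p : ℝ) / 2 ^ t - 1) ≤ (((A i).card - 1 : ℕ) : ℝ) := by
      intro i
      have h1 : 1 ≤ (A i).card := (hA i).card_pos
      have := hcard i
      push_cast [h1]
      linarith
    have hsumR : (k - 1 : ℕ) * ((p : ℝ) / 2 ^ t - 1) ≤ ((∑ i, ((A i).card - 1) : ℕ) : ℝ) := by
      push_cast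
      calc ((k-1 : ℕ) : ℝ) * ((p : ℝ) / 2 ^ t - 1)
          = ∑ _i : Fin (k-1), ((p : ℝ) / 2 ^ t - 1) := by
            rw [Finset.sum_const, Finset.card_univ, Fintype.card_fin, nsmul_eq_mul]
        _ ≤ ∑ i : Fin (k-1), (((A i).card - 1 : ℕ) : ℝ) :=
            Finset.sum_le_sum fun i _ => hterm i
    have hfrac : (2 : ℝ) * 2 ^ t * ((p : ℝ) / 2 ^ t - 1) ≤ ((k-1 : ℕ) : ℝ) * ((p : ℝ) / 2 ^ t - 1) := by
      have h2 : (0 : ℝ) ≤ (p : ℝ) / 2 ^ t - 1 := by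
        rw [sub_nonneg, le_div_iff₀ hpow]
        have : (2 : ℝ) * 2 ^ t ≤ p := by exact_mod_cast ht2
        linarith
      apply mul_le_mul_of_nonneg_right _ h2
      exact_mod_cast ht1
    have hval : (2 : ℝ) * 2 ^ t * ((p : ℝ) / 2 ^ t - 1) = 2 * p - 2 * 2 ^ t := by
      field_simp
    have : (p : ℝ) ≤ ((∑ i, ((A i).card - 1) : ℕ) : ℝ) := by
      have h2p : (2 : ℝ) * 2 ^ t ≤ p := by exact_mod_cast ht2
      nlinarith
    exact_mod_cast this
  have hcard_sum : p ≤ (∑ i, A i).card := by omega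
  have hle : (∑ i, A i).card ≤ p := by
    have := Finset.card_le_univ (∑ i, A i)
    simpa [ZMod.card p] using this
  apply Finset.eq_univ_of_card
  simp [ZMod.card p]
  omega
end

section
/- Let p be a prime, k > 1 an integer, and t a nonnegative integer with 2^t ≤ (k−1)/2 and 2^t ≤ p/2 (that is, t ≤ min{log_2((k−1)/2), log_2(p/2)}). Then for any distinct g_0, g_1 ∈ Z_p there is no deterministic one-round k-party protocol with per-party communication complexity t solving Sum-Dist relative to g_0, g_1. Formally: there do not exist encoding functions e_1, …, e_k : Z_p → {0,1}^t and a decoder dec : ({0,1}^t)^k → {0,1} such that for all x_1, …, x_k ∈ Z_p, x_1 + ⋯ + x_k = g_0 implies dec(e_1(x_1), …, e_k(x_k)) = 0 and x_1 + ⋯ + x_k = g_1 implies dec(e_1(x_1), …, e_k(x_k)) = 1. -/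
open Finset Pointwise

lemma mem_sum_rep {M : Type*} [AddCommMonoid M] [DecidableEq M] :
    ∀ (n : ℕ) (F : Fin n → Finset M) (g : M), g ∈ ∑ i, F i →
      ∃ x : Fin n → M, (∀ i, x i ∈ F i) ∧ ∑ i, x i = g := by
  intro n
  induction n with
  | zero =>
    intro F g hg
    simp only [Finset.univ_eq_empty, Finset.sum_empty, Finset.mem_zero] at hg
    exact ⟨Fin.elim0, fun i => i.elim0, by simp [hg]⟩
  | succ n ih =>
    intro F g hg
    rw [Fin.sum_univ_succ] at hg
    rw [Finset.mem_add] at hg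
    obtain ⟨a, ha, b, hb, hab⟩ := hg
    obtain ⟨y, hy, hys⟩ := ih (fun i => F i.succ) b hb
    refine ⟨Fin.cons a y, ?_, ?_⟩
    · intro i
      refine Fin.cases ?_ ?_ i
      · simpa using ha
      · intro j; simpa using hy j
    · rw [Fin.sum_univ_succ]
      simpa [hys] using hab

lemma CD_iter {p : ℕ} (hp : p.Prime) :
    ∀ (n : ℕ) (F : Fin n → Finset (ZMod p)), (∀ i, (F i).Nonempty) →
      min p (∑ i, ((F i).card - 1) + 1) ≤ (∑ i, F i).card := by
  intro n
  induction n with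
  | zero =>
    intro F _
    simp only [Finset.univ_eq_empty, Finset.sum_empty]
    have : ((0 : Finset (ZMod p))).card = 1 := by simp
    rw [this]
    exact min_le_of_right_le le_rfl
  | succ n ih =>
    intro F hF
    have hS := ih (fun i => F i.succ) (fun i => hF i.succ)
    set S := ∑ i : Fin n, F i.succ with hSdef
    have hSne : S.Nonempty := by
      rw [← Finset.card_pos]
      refine lt_of_lt_of_le ?_ hS
      have : 0 < p := hp.pos
      omega
    have hcd := ZMod.cauchy_davenport hp (hF 0) hSne
    have hsum : (∑ i : Fin (n+1), F i) = F 0 + S := by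
      rw [hSdef]; exact Fin.sum_univ_succ F
    rw [hsum, Fin.sum_univ_succ]
    refine le_trans ?_ hcd
    have h0 : 1 ≤ (F 0).card := Finset.card_pos.mpr (hF 0)
    rcases le_or_gt p S.card with h | h
    · have : p ≤ (F 0).card + S.card - 1 := by omega
      omega
    · have hS' : ∑ i : Fin n, ((F i.succ).card - 1) + 1 ≤ S.card := by
        rcases min_le_iff.mp hS with h' | h' <;> omega
      omega

/-- Lower bound for Sum-Dist over `ℤ_p`: if `2^t ≤ (k − 1)/2` and `2^t ≤ p/2`,
then no deterministic one-round `k`-party protocol in which each party sends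
`t` bits (encoders `e_i : ℤ_p → {0,1}^t`, decoder `dec : ({0,1}^t)^k → {0,1}`)
solves Sum-Dist relative to any distinct `g₀, g₁ ∈ ℤ_p`. -/
theorem sumDist_lower_bound (p : ℕ) [Fact p.Prime] (k : ℕ) (hk : 1 < k)
    (t : ℕ) (ht1 : 2 * 2 ^ t ≤ k - 1) (ht2 : 2 * 2 ^ t ≤ p)
    (g₀ g₁ : ZMod p) (hg : g₀ ≠ g₁) :
    ¬ ∃ (e : Fin k → ZMod p → (Fin t → Bool))
        (dec : (Fin k → (Fin t → Bool)) → Fin 2),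
        ∀ x : Fin k → ZMod p,
          ((∑ i, x i) = g₀ → dec (fun i => e i (x i)) = 0) ∧
          ((∑ i, x i) = g₁ → dec (fun i => e i (x i)) = 1) := by
  rintro ⟨e, dec, hprot⟩
  have hp : p.Prime := Fact.out
  haveI : NeZero p := ⟨hp.ne_zero⟩
  have hm1 : 1 ≤ 2 ^ t := Nat.one_le_two_pow
  set m := 2 ^ t with hm
  have hp2m : 2 * m ≤ p := ht2
  have hpk : 2 * m + 1 ≤ k := by omega
  set q := (p - 1) / m with hq
  have hq1 : 1 ≤ q := by
    rw [hq]
    rw [Nat.le_div_iff_mul_le (by omega)]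
    omega
  have hplt : p - 1 < m * (q + 1) := by
    rw [hq]
    have := Nat.lt_mul_div_succ (p - 1) (show 0 < m by omega)
    omega
  have hkq : p - 1 ≤ k * q := by
    have : (2 * m + 1) * q = 2 * (m * q) + q := by ring
    nlinarith [Nat.mul_le_mul_right q hpk]
  -- pigeonhole: each encoder has a fiber of size ≥ q + 1
  have hcardmsg : Fintype.card (Fin t → Bool) = m := by
    rw [hm]; simp
  have hfiber : ∀ i : Fin k, ∃ y : Fin t → Bool,
      q < (Finset.univ.filter fun x : ZMod p => e i x = y).card := by
    intro i
    apply Fintype.exists_lt_card_fiber_of_mul_lt_card (f := e i)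
    rw [hcardmsg, ZMod.card]
    have h1 : q * m ≤ p - 1 := by rw [hq]; exact Nat.div_mul_le_self _ _
    have h2 : m * q = q * m := Nat.mul_comm _ _
    omega
  choose msg hmsg using hfiber
  set F : Fin k → Finset (ZMod p) :=
    fun i => Finset.univ.filter fun x : ZMod p => e i x = msg i with hF
  have hFne : ∀ i, (F i).Nonempty := by
    intro i
    rw [← Finset.card_pos]
    have h := hmsg i
    have : (F i).card = (Finset.univ.filter fun x : ZMod p => e i x = msg i).card := by
      simp only [hF]
    omega
  have hcards : ∀ i, q + 1 ≤ (F i).card := fun i => hmsg i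
  have hbig : p ≤ ∑ i : Fin k, ((F i).card - 1) + 1 := by
    have : ∑ i : Fin k, q ≤ ∑ i : Fin k, ((F i).card - 1) :=
      Finset.sum_le_sum fun i _ => by have := hcards i; omega
    simp only [Finset.sum_const, Finset.card_univ, Fintype.card_fin, smul_eq_mul] at this
    omega
  have hCD := CD_iter hp k F hFne
  have hcardsum : (∑ i, F i).card = p := by
    have h1 : p ≤ (∑ i, F i).card := le_trans (by simp [min_le_iff]; omega) hCD
    have h2 : (∑ i, F i).card ≤ Fintype.card (ZMod p) := Finset.card_le_univ _
    rw [ZMod.card] at h2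
    omega
  have huniv : (∑ i, F i) = Finset.univ := by
    apply Finset.eq_univ_of_card
    rw [hcardsum, ZMod.card]
  have hrep : ∀ g : ZMod p, ∃ x : Fin k → ZMod p,
      (∀ i, e i (x i) = msg i) ∧ ∑ i, x i = g := by
    intro g
    obtain ⟨x, hx, hxs⟩ := mem_sum_rep k F g (by rw [huniv]; exact Finset.mem_univ g)
    exact ⟨x, fun i => (Finset.mem_filter.mp (hx i)).2, hxs⟩
  obtain ⟨x0, hx0, hx0s⟩ := hrep g₀
  obtain ⟨x1, hx1, hx1s⟩ := hrep g₁
  have h0 := (hprot x0).1 hx0s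
  have h1 := (hprot x1).2 hx1s
  have : (fun i => e i (x0 i)) = (fun i => e i (x1 i)) := by
    funext i; rw [hx0 i, hx1 i]
  rw [this, h1] at h0
  exact absurd h0 (by decide)
end

section
/- Let p > 2 be a prime, D an integer with 1 ≤ D < p, and ξ ∈ (0,1). Then for any distinct g, g' ∈ Z_p, there are at least ξ·(p−1) values c ∈ Z_p with c ≠ 0 such that dist_{p,D}(c·g mod p, c·g' mod p) > (1−ξ)·(p−1)/2. -/
/-- For a prime `p > 2`, a difference `1 ≤ D < p`, `ξ ∈ (0,1)`, and distinct
`g, g' ∈ ℤ_p`, at least `ξ·(p − 1)` of the nonzero `c ∈ ℤ_p` satisfy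
`dist_{p,D}(c·g, c·g') > (1 − ξ)·(p − 1)/2`. -/
theorem many_scales_far (p : ℕ) [Fact p.Prime] (hp : 2 < p)
    (D : ℕ) (hD1 : 1 ≤ D) (hDp : D < p)
    (ξ : ℝ) (hξ0 : 0 < ξ) (hξ1 : ξ < 1)
    (g g' : ZMod p) (hg : g ≠ g') :
    ξ * ((p : ℝ) - 1) ≤
      (({c : ZMod p | c ≠ 0 ∧
          (1 - ξ) * ((p : ℝ) - 1) / 2 < (distPD p D (c * g) (c * g') : ℝ)}.ncard : ℕ) : ℝ) := by
  have hpR : (2:ℝ) < (p:ℝ) := by exact_mod_cast hp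
  set t : ℝ := (1 - ξ) * ((p : ℝ) - 1) / 2 with ht
  have ht0 : 0 ≤ t := by
    have h1 : (0:ℝ) ≤ 1 - ξ := by linarith
    have h2 : (0:ℝ) ≤ (p:ℝ) - 1 := by linarith
    positivity
  set m : ℕ := ⌊t⌋₊ with hm
  have hmt : (m : ℝ) ≤ t := Nat.floor_le ht0
  have htlt : t < ((p:ℝ) - 1) / 2 := by
    have : (0:ℝ) < (p:ℝ) - 1 := by linarith
    rw [ht]
    nlinarith
  have h2m : 2 * m + 1 < p := by
    have : (2 * m : ℝ) < (p:ℝ) - 1 := by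
      calc (2*m : ℝ) ≤ 2*t := by linarith
        _ < (p:ℝ) - 1 := by linarith
    have h' : (2 * m : ℕ) < p - 1 := by
      have hp1 : (1:ℕ) ≤ p := by omega
      exact_mod_cast (by push_cast [hp1]; linarith : ((2*m : ℕ) : ℝ) < ((p - 1 : ℕ) : ℝ))
    omega
  -- the unit u
  have hDz : (D : ZMod p) ≠ 0 := by
    rw [Ne, ZMod.natCast_eq_zero_iff]
    exact Nat.not_dvd_of_pos_of_lt (by omega) hDp
  set u : ZMod p := (g' - g) * (D : ZMod p)⁻¹ with hu
  have hu0 : u ≠ 0 := mul_ne_zero (sub_ne_zero.mpr (Ne.symm hg)) (inv_ne_zero hDz)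
  set S : Set (ZMod p) := {c : ZMod p | c ≠ 0 ∧
      t < (distPD p D (c * g) (c * g') : ℝ)} with hS
  -- the injection
  set f : ℕ → ZMod p := fun n => (n : ZMod p) * u⁻¹ with hf
  have hmem : ∀ n ∈ Finset.Ico (m + 1) (p - m), f n ∈ S := by
    intro n hn
    simp only [Finset.mem_Ico] at hn
    obtain ⟨hn1, hn2⟩ := hn
    have hnp : n < p := by omega
    have hnval : ((n : ZMod p)).val = n := ZMod.val_cast_of_lt hnp
    have hn0 : (n : ZMod p) ≠ 0 := by
      intro h
      rw [h, ZMod.val_zero] at hnval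
      omega
    have hc0 : f n ≠ 0 := mul_ne_zero hn0 (inv_ne_zero hu0)
    have hfu : f n * u = (n : ZMod p) := by
      rw [hf]
      field_simp
    refine ⟨hc0, ?_⟩
    have hd1 : (f n * g' - f n * g) * (D : ZMod p)⁻¹ = (n : ZMod p) := by
      rw [← hfu, hu]; ring
    have hd2 : (f n * g - f n * g') * (D : ZMod p)⁻¹ = -(n : ZMod p) := by
      rw [← hfu, hu]; ring
    have hdist : distPD p D (f n * g) (f n * g') = min n (p - n) := by
      unfold distPD
      rw [hd1, hd2, hnval, ZMod.neg_val, if_neg hn0, hnval]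
    rw [hdist]
    have hfl1 : t < (n : ℝ) := by
      have := (Nat.floor_lt ht0).mp (by omega : ⌊t⌋₊ < n)
      exact this
    have hfl2 : t < ((p - n : ℕ) : ℝ) := by
      have : m < p - n := by omega
      exact (Nat.floor_lt ht0).mp this
    push_cast [Nat.cast_min]
    exact lt_min hfl1 hfl2
  have hSfin : S.Finite := Set.toFinite S
  have hinj : Set.InjOn f (Finset.Ico (m + 1) (p - m)) := by
    intro a ha b hb hab
    simp only [Finset.coe_Ico, Set.mem_Ico] at ha hb
    have : (a : ZMod p) = (b : ZMod p) := by
      have := congrArg (fun x => x * u) hab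
      simpa [hf, mul_assoc, inv_mul_cancel₀ hu0] using this
    have h1 : ((a : ZMod p)).val = a := ZMod.val_cast_of_lt (by omega)
    have h2 : ((b : ZMod p)).val = b := ZMod.val_cast_of_lt (by omega)
    rw [← h1, ← h2, this]
  have hcard : (Finset.Ico (m + 1) (p - m)).card ≤ S.ncard := by
    have himg : ((Finset.Ico (m + 1) (p - m)).image f : Set (ZMod p)) ⊆ S := by
      intro x hx
      simp only [Finset.coe_image, Set.mem_image, Finset.mem_coe] at hx
      obtain ⟨n, hn, rfl⟩ := hx
      exact hmem n hn
    calc (Finset.Ico (m + 1) (p - m)).card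
        = ((Finset.Ico (m + 1) (p - m)).image f).card :=
          (Finset.card_image_of_injOn (by simpa using hinj)).symm
      _ = (((Finset.Ico (m + 1) (p - m)).image f : Set (ZMod p))).ncard :=
          (Set.ncard_coe_finset _).symm
      _ ≤ S.ncard := Set.ncard_le_ncard himg hSfin
  have hIco : (Finset.Ico (m + 1) (p - m)).card = p - (2 * m + 1) := by
    rw [Nat.card_Ico]
    omega
  have hfinal : ξ * ((p : ℝ) - 1) ≤ ((p - (2 * m + 1) : ℕ) : ℝ) := by
    have hcast : ((p - (2 * m + 1) : ℕ) : ℝ) = (p : ℝ) - (2 * m + 1) := by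
      push_cast [Nat.cast_sub (le_of_lt h2m)]
      ring
    rw [hcast]
    have : ξ * ((p:ℝ) - 1) = ((p:ℝ) - 1) - 2 * t := by rw [ht]; ring
    rw [this]
    linarith
  calc ξ * ((p : ℝ) - 1) ≤ ((p - (2 * m + 1) : ℕ) : ℝ) := hfinal
    _ = ((Finset.Ico (m + 1) (p - m)).card : ℝ) := by rw [hIco]
    _ ≤ (S.ncard : ℝ) := by exact_mod_cast hcard
end

section
/- Let p > 5 be a prime, k a positive integer with k < p/4, ε ∈ (2k/(p−3), 1), and g ∈ Z_p. Set D = ⌈2kp/(ε(p−3))⌉. Fix x_1, …, x_k ∈ Z_p with x_1 + ⋯ + x_k ≠ g in Z_p. For c ∈ Z_p with c ≠ 0, let b_i(c) = ((c·x_i) mod p) mod D and let A_{(b_i(c))} be the D-AP in Z_p with base b_i(c). Then the number of c ∈ Z_p \ {0} such that c·g mod p ∈ Σ_{i=1}^k A_{(b_i(c))} is at most ε·(p−1). (Moreover, if x_1 + ⋯ + x_k = g in Z_p, then c·g mod p ∈ Σ_{i=1}^k A_{(b_i(c))} for every c ≠ 0.) -/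
open Pointwise

lemma mem_dAP {p D b : ℕ} {y : ZMod p} :
    y ∈ dAP p D b ↔ ∃ j, j ≤ (p - 1 - b) / D ∧ y = ((b + j * D : ℕ) : ZMod p) := by
  simp only [dAP, Finset.mem_image, Finset.mem_range, Nat.lt_succ_iff]
  constructor
  · rintro ⟨j, hj, rfl⟩; exact ⟨j, hj, rfl⟩
  · rintro ⟨j, hj, rfl⟩; exact ⟨j, hj, rfl⟩

lemma self_mem_dAP {p : ℕ} [NeZero p] {D : ℕ} (hD : 0 < D) (z : ZMod p) :
    z ∈ dAP p D (z.val % D) := by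
  rw [mem_dAP]
  refine ⟨z.val / D, ?_, ?_⟩
  · apply Nat.le_trans (le_of_eq (Nat.mul_div_cancel (z.val / D) hD).symm)
    apply Nat.div_le_div_right
    have h1 : z.val ≤ p - 1 := Nat.le_sub_one_of_lt (ZMod.val_lt z)
    have h2 := Nat.mod_add_div' z.val D
    omega
  · rw [Nat.mod_add_div']
    simp [ZMod.natCast_val, ZMod.cast_id]

lemma extract {p : ℕ} [Fact p.Prime] {D : ℕ} (hD : 0 < D) {k : ℕ}
    (x : Fin k → ZMod p) (c y : ZMod p)
    (h : y ∈ ∑ i, dAP p D ((c * x i).val % D)) :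
    ∃ t : ℤ, (D : ZMod p) * t = y - ∑ i, c * x i ∧ t.natAbs ≤ k * ((p - 1) / D) := by
  rw [← Finset.mem_coe, Finset.coe_sum, Set.mem_fintype_sum] at h
  obtain ⟨a, ha, hay⟩ := h
  have hrep : ∀ i, ∃ j, j ≤ (p - 1) / D ∧
      a i = (((c * x i).val % D + j * D : ℕ) : ZMod p) := by
    intro i
    obtain ⟨j, hj1, hj2⟩ := mem_dAP.mp (ha i)
    exact ⟨j, le_trans hj1 (Nat.div_le_div_right (Nat.sub_le _ _)), hj2⟩
  have hrep' : ∀ i, ∃ m, m ≤ (p - 1) / D ∧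
      c * x i = (((c * x i).val % D + m * D : ℕ) : ZMod p) := by
    intro i
    obtain ⟨m, hm1, hm2⟩ := mem_dAP.mp (self_mem_dAP hD (c * x i))
    exact ⟨m, le_trans hm1 (Nat.div_le_div_right (Nat.sub_le _ _)), hm2⟩
  choose j hj1 hj2 using hrep
  choose m hm1 hm2 using hrep'
  refine ⟨∑ i, ((j i : ℤ) - (m i : ℤ)), ?_, ?_⟩
  · have key : ∀ i, (D : ZMod p) * ((j i : ZMod p) - (m i : ZMod p))
        = a i - c * x i := by
      intro i
      have e1 := hj2 i
      have e2 := hm2 i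
      generalize (c * x i).val % D = B at e1 e2
      rw [e1, e2]
      push_cast
      ring
    have hc : ((∑ i, ((j i : ℤ) - (m i : ℤ)) : ℤ) : ZMod p)
        = ∑ i, ((j i : ZMod p) - (m i : ZMod p)) := by
      push_cast
      rfl
    rw [hc, Finset.mul_sum, Finset.sum_congr rfl (fun i _ => key i),
      Finset.sum_sub_distrib, hay]
  · have h1 : |∑ i, ((j i : ℤ) - (m i : ℤ))| ≤ ((k * ((p - 1) / D) : ℕ) : ℤ) := by
      refine le_trans (Finset.abs_sum_le_sum_abs _ _) ?_
      refine le_trans (Finset.sum_le_sum (g := fun _ => (((p - 1) / D : ℕ) : ℤ))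
        (fun i _ => ?_)) ?_
      · have := hj1 i; have := hm1 i
        show |(j i : ℤ) - (m i : ℤ)| ≤ (((p - 1) / D : ℕ) : ℤ)
        refine abs_le.mpr ⟨by omega, by omega⟩
      · simp [Finset.sum_const, Finset.card_univ]
    rw [Int.abs_eq_natAbs] at h1
    exact_mod_cast h1

/-- Correctness of the randomized one-round Sum-Equal protocol over `ℤ_p` with
public randomness `c` uniform in `ℤ_p \ {0}`: with `D = ⌈2kp/(ε(p − 3))⌉` and
`b_i(c) = ((c·x_i) mod p) mod D`, if `Σ_i x_i ≠ g` then at most `ε·(p − 1)`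
nonzero values `c` make the coordinator's test `c·g ∈ Σ_i A_{(b_i(c))}` pass;
moreover if `Σ_i x_i = g` the test passes for every `c ≠ 0`. -/
theorem sumEqual_protocol_correct (p : ℕ) [Fact p.Prime] (hp : 5 < p)
    (k : ℕ) (hk : 0 < k) (hkp : 4 * k < p)
    (ε : ℝ) (hε1 : 2 * k / ((p : ℝ) - 3) < ε) (hε2 : ε < 1)
    (g : ZMod p)
    (D : ℕ) (hD : D = ⌈(2 * k * p : ℝ) / (ε * ((p : ℝ) - 3))⌉₊)
    (x : Fin k → ZMod p) :
    ((∑ i, x i) ≠ g →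
      (({c : ZMod p | c ≠ 0 ∧
          c * g ∈ ∑ i, dAP p D ((c * x i).val % D)}.ncard : ℕ) : ℝ)
        ≤ ε * ((p : ℝ) - 1)) ∧
    ((∑ i, x i) = g →
      ∀ c : ZMod p, c ≠ 0 → c * g ∈ ∑ i, dAP p D ((c * x i).val % D)) := by
  have hp3 : (3 : ℝ) < p := by exact_mod_cast lt_trans (by norm_num) hp
  have hk1 : (1 : ℝ) ≤ k := by exact_mod_cast hk
  have hε0 : 0 < ε := lt_trans (div_pos (by nlinarith) (by linarith)) hε1
  have hxpos : (0 : ℝ) < (2 * k * p) / (ε * ((p : ℝ) - 3)) := by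
    apply div_pos (by positivity) (by nlinarith)
  have hD1 : 0 < D := by rw [hD]; exact Nat.ceil_pos.mpr hxpos
  have hDle : (2 * k * p : ℝ) / (ε * ((p : ℝ) - 3)) ≤ D := hD ▸ Nat.le_ceil _
  have h2kD : 2 * k < D := by
    rw [hD, Nat.lt_ceil]
    push_cast
    rw [lt_div_iff₀ (by nlinarith)]
    have hεp : ε * ((p : ℝ) - 3) < p := by nlinarith
    nlinarith [mul_lt_mul_of_pos_left hεp (show (0:ℝ) < 2 * k by nlinarith)]
  have hεD : 2 * (k : ℝ) ≤ ε * D := by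
    have hεne : ε ≠ 0 := ne_of_gt hε0
    have hp3ne : ((p : ℝ) - 3) ≠ 0 := by linarith
    have h1 : ε * ((2 * k * p) / (ε * ((p : ℝ) - 3))) = 2 * k * p / ((p : ℝ) - 3) := by
      field_simp
    have h2 : 2 * (k : ℝ) ≤ 2 * k * p / ((p : ℝ) - 3) := by
      rw [le_div_iff₀ (by linarith)]
      nlinarith
    have h3 := mul_le_mul_of_nonneg_left hDle (le_of_lt hε0)
    linarith [h1 ▸ h3]
  constructor
  · intro hne
    have hgs : g - (∑ i, x i) ≠ 0 := sub_ne_zero.mpr (Ne.symm hne)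
    set S := {c : ZMod p | c ≠ 0 ∧
        c * g ∈ ∑ i, dAP p D ((c * x i).val % D)} with hS
    have hext : ∀ c ∈ S, ∃ t : ℤ, (D : ZMod p) * t = c * (g - ∑ i, x i) ∧
        t ≠ 0 ∧ t.natAbs ≤ k * ((p - 1) / D) := by
      rintro c ⟨hc0, hcm⟩
      obtain ⟨t, ht1, ht2⟩ := extract hD1 x c (c * g) hcm
      have ht1' : (D : ZMod p) * t = c * (g - ∑ i, x i) := by
        rw [ht1, ← Finset.mul_sum]; ring
      have hcgs : c * (g - ∑ i, x i) ≠ 0 := mul_ne_zero hc0 hgs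
      refine ⟨t, ht1', ?_, ht2⟩
      rintro rfl
      apply hcgs
      rw [← ht1']
      simp
    by_cases hD0 : (D : ZMod p) = 0
    · have : S = ∅ := by
        ext c
        simp only [Set.mem_empty_iff_false, iff_false]
        intro hc
        obtain ⟨t, ht1, ht2, _⟩ := hext c hc
        have : c * (g - ∑ i, x i) = 0 := by rw [← ht1, hD0, zero_mul]
        exact (mul_ne_zero (hc.1) hgs) this
      rw [this]
      simp only [Set.ncard_empty, Nat.cast_zero]
      nlinarith
    · set M := k * ((p - 1) / D) with hM
      have hMD : M * D ≤ k * (p - 1) := by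
        calc M * D = k * ((p - 1) / D * D) := by rw [hM]; ring
        _ ≤ k * (p - 1) := Nat.mul_le_mul_left _ (Nat.div_mul_le_self _ _)
      have h2M : 2 * M < p - 1 := by
        have h1 : 2 * M * D ≤ 2 * k * (p - 1) := by
          calc 2 * M * D = 2 * (M * D) := by ring
          _ ≤ 2 * (k * (p - 1)) := Nat.mul_le_mul_left _ hMD
          _ = 2 * k * (p - 1) := by ring
        have h2 : 2 * k * (p - 1) < D * (p - 1) :=
          Nat.mul_lt_mul_of_lt_of_le h2kD (le_refl _) (by omega)
        have h3 : 2 * M * D < (p - 1) * D := by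
          calc 2 * M * D ≤ 2 * k * (p - 1) := h1
          _ < D * (p - 1) := h2
          _ = (p - 1) * D := by ring
        exact Nat.lt_of_mul_lt_mul_right h3
      set φ : ZMod p → ℤ := fun c => ((D : ZMod p)⁻¹ * (c * (g - ∑ i, x i))).valMinAbs
        with hφdef
      set T : Finset ℤ := (Finset.Icc (-(M : ℤ)) M).erase 0 with hT
      have hmaps : ∀ c ∈ S, φ c ∈ (T : Set ℤ) := by
        intro c hc
        obtain ⟨t, ht1, ht0, ht2⟩ := hext c hc
        have hval : (D : ZMod p)⁻¹ * (c * (g - ∑ i, x i)) = (t : ZMod p) := by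
          rw [← ht1, ← mul_assoc, inv_mul_cancel₀ hD0, one_mul]
        have hφc : φ c = t := by
          rw [hφdef]
          simp only []
          rw [ZMod.valMinAbs_spec]
          refine ⟨hval, ?_⟩
          simp only [Set.mem_Ioc]
          constructor <;> omega
        rw [hφc]
        refine Finset.mem_coe.mpr (Finset.mem_erase.mpr
          ⟨ht0, Finset.mem_Icc.mpr ⟨by omega, by omega⟩⟩)
      have hinj : Set.InjOn φ S := by
        intro c1 _ c2 _ he
        have e1 : ((φ c1 : ℤ) : ZMod p) = (D : ZMod p)⁻¹ * (c1 * (g - ∑ i, x i)) :=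
          ZMod.coe_valMinAbs _
        have e2 : ((φ c2 : ℤ) : ZMod p) = (D : ZMod p)⁻¹ * (c2 * (g - ∑ i, x i)) :=
          ZMod.coe_valMinAbs _
        rw [he, e2] at e1
        have e3 := mul_left_cancel₀ (inv_ne_zero hD0) e1.symm
        exact mul_right_cancel₀ hgs e3
      have hcard := Set.ncard_le_ncard_of_injOn φ hmaps hinj (Finset.finite_toSet T)
      rw [Set.ncard_coe_finset] at hcard
      have hTcard : T.card = 2 * M := by
        rw [hT, Finset.card_erase_of_mem (by simp), Int.card_Icc]
        simp
        omega
      rw [hTcard] at hcard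
      have hcast : ((S.ncard : ℕ) : ℝ) ≤ 2 * (M : ℝ) := by exact_mod_cast hcard
      refine le_trans hcast ?_
      have hMDr : (M : ℝ) * D ≤ k * ((p : ℝ) - 1) := by
        have := hMD
        have hcast2 : ((M * D : ℕ) : ℝ) ≤ ((k * (p - 1) : ℕ) : ℝ) := by exact_mod_cast this
        push_cast [Nat.cast_sub (by omega : 1 ≤ p)] at hcast2
        linarith
      have hDpos : (0 : ℝ) < D := by exact_mod_cast hD1
      nlinarith [mul_le_mul_of_nonneg_right hεD (by linarith : (0:ℝ) ≤ (p:ℝ) - 1)]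
  · intro hsum c hc
    rw [← Finset.mem_coe, Finset.coe_sum,
      show c * g = ∑ i, c * x i from by rw [← Finset.mul_sum, hsum]]
    exact Set.finset_sum_mem_finset_sum _ _ _
      (fun i _ => Finset.mem_coe.mpr (self_mem_dAP hD1 (c * x i)))
end

section
/- There is a universal constant C such that for every prime p, every positive integer k, every ε ∈ (0,1), and every g ∈ Z_p, there exist a finite message set M with |M| ≤ C·k/ε, a finite randomness set R, encoding functions e_1, …, e_k : Z_p × R → M, and a decoder dec : M^k × R → {0,1} such that for all x_1, …, x_k ∈ Z_p: if x_1 + ⋯ + x_k = g in Z_p, then dec(e_1(x_1, r), …, e_k(x_k, r), r) = 1 for every r ∈ R; and if x_1 + ⋯ + x_k ≠ g in Z_p, then the fraction of r ∈ R for which dec(e_1(x_1, r), …, e_k(x_k, r), r) = 1 is at most ε. Consequently the total communication complexity k·⌈log_2 |M|⌉ is at most k·log_2(k/ε) + C'·k for a universal constant C'. -/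
set_option maxHeartbeats 1000000 in
/-- There is a universal constant `C` such that for every prime `p`, every
`k ≥ 1`, every `ε ∈ (0,1)`, and every `g ∈ ℤ_p`, there is a one-round `k`-party
public-randomness protocol (randomness set `R`, encoders
`e_i : ℤ_p × R → M`, decoder `dec : M^k × R → {0,1}`) with message set `M` of
size at most `C·k/ε` computing Sum-Equal relative to `g` with one-sided error
at most `ε`; consequently its total communication `k·⌈log₂ |M|⌉` is at most
`k·log₂(k/ε) + C'·k` for a universal constant `C'`. -/
theorem sumEqual_upper_bound :
    ∃ (C C' : ℝ), 0 < C ∧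
      ∀ (p : ℕ), p.Prime → ∀ (k : ℕ), 0 < k → ∀ ε : ℝ, 0 < ε → ε < 1 →
        ∀ g : ZMod p,
        ∃ (m R : ℕ) (e : Fin k → ZMod p → Fin R → Fin m)
          (dec : (Fin k → Fin m) → Fin R → Fin 2),
          0 < m ∧ 0 < R ∧ (m : ℝ) ≤ C * k / ε ∧
          (∀ x : Fin k → ZMod p,
            ((∑ i, x i) = g → ∀ r, dec (fun i => e i (x i) r) r = 1) ∧
            ((∑ i, x i) ≠ g →
              ((Finset.univ.filter
                  (fun r : Fin R => dec (fun i => e i (x i) r) r = 1)).card : ℝ)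
                ≤ ε * R)) ∧
          ((k * Nat.clog 2 m : ℕ) : ℝ) ≤ k * Real.logb 2 ((k : ℝ) / ε) + C' * k := by
  classical
  refine ⟨5, 4, by norm_num, ?_⟩
  intro p hp k hk ε hε hε1 g
  haveI : Fact p.Prime := ⟨hp⟩
  have hp2 : 2 ≤ p := hp.two_le
  have hp0 : 0 < p := by omega
  have hk0 : (0:ℝ) < k := by exact_mod_cast hk
  set m : ℕ := ⌈(4 * k : ℝ) / ε⌉₊ with hm_def
  have hm_ge : (4 * k : ℝ) / ε ≤ m := Nat.le_ceil _
  have hm4k : 4 * k < m := by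
    have h1 : (4 * k : ℝ) < (4 * k : ℝ) / ε := by
      rw [lt_div_iff₀ hε]; nlinarith
    exact_mod_cast h1.trans_le hm_ge
  have hm0 : 0 < m := by omega
  have hkm : k < m := by omega
  -- the random multiplier
  set a : Fin (p - 1) → ZMod p := fun r => (((r : ℕ) + 1 : ℕ) : ZMod p) with ha_def
  have ha_ne : ∀ r : Fin (p - 1), a r ≠ 0 := by
    intro r h
    rw [ha_def] at h
    rw [ZMod.natCast_eq_zero_iff] at h
    have hr : (r : ℕ) + 1 < p := by have := r.2; omega
    have := Nat.le_of_dvd (by omega) h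
    omega
  have ha_val : ∀ r : Fin (p - 1), (a r).val = (r : ℕ) + 1 := by
    intro r
    have hr : (r : ℕ) + 1 < p := by have := r.2; omega
    exact ZMod.val_cast_of_lt hr
  have he_lt : ∀ (z : ZMod p), z.val * m / p < m := by
    intro z
    rw [Nat.div_lt_iff_lt_mul hp0]
    have hz := ZMod.val_lt z
    calc z.val * m < p * m := (Nat.mul_lt_mul_right hm0).mpr hz
      _ = m * p := Nat.mul_comm _ _
  refine ⟨m, p - 1,
    fun i x r => ⟨(a r * x).val * m / p, he_lt _⟩,
    fun s r => if ∃ c < k, (∑ i, (s i : ℕ)) * p ≤ ((a r * g).val + c * p) * m ∧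
        ((a r * g).val + c * p) * m < (∑ i, (s i : ℕ)) * p + k * p then 1 else 0,
    hm0, by omega, ?_, ?_, ?_⟩
  · -- m ≤ 5 k / ε
    have h1 : (m : ℝ) < (4 * k : ℝ) / ε + 1 := Nat.ceil_lt_add_one (by positivity)
    have h2 : (1 : ℝ) ≤ (k : ℝ) / ε := by
      rw [le_div_iff₀ hε]
      have : (1:ℝ) ≤ k := by exact_mod_cast hk
      nlinarith
    have h3 : (4 * k : ℝ) / ε = 4 * ((k:ℝ)/ε) := by ring
    rw [h3] at h1
    have h5 : (5:ℝ) * k / ε = 5 * ((k:ℝ)/ε) := by ring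
    rw [h5]
    nlinarith
  · -- main correctness
    intro x
    have huniv : (Finset.univ : Finset (Fin k)).Nonempty :=
      Finset.univ_nonempty_iff.mpr (Fin.pos_iff_nonempty.mp hk)
    -- general facts for any r
    have key : ∀ r : Fin (p - 1),
        (∑ i, ((a r * x i).val * m / p)) * p ≤ (∑ i, (a r * x i).val) * m ∧
        (∑ i, (a r * x i).val) * m < (∑ i, ((a r * x i).val * m / p)) * p + k * p ∧
        (∑ i, (a r * x i).val) < k * p := by
      intro r
      refine ⟨?_, ?_, ?_⟩
      · rw [Finset.sum_mul, Finset.sum_mul]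
        apply Finset.sum_le_sum
        intro i _
        exact Nat.div_mul_le_self _ _
      · rw [Finset.sum_mul, Finset.sum_mul]
        have hstep : ∀ i : Fin k, (a r * x i).val * m < ((a r * x i).val * m / p) * p + p := by
          intro i
          have h1 := Nat.div_add_mod ((a r * x i).val * m) p
          have h2 := Nat.mod_lt ((a r * x i).val * m) hp0
          nlinarith [h1, h2]
        calc ∑ i, (a r * x i).val * m
            < ∑ i : Fin k, (((a r * x i).val * m / p) * p + p) :=
              Finset.sum_lt_sum_of_nonempty huniv (fun i _ => hstep i)
          _ = (∑ i, ((a r * x i).val * m / p) * p) + k * p := by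
              rw [Finset.sum_add_distrib, Finset.sum_const, Finset.card_univ,
                Fintype.card_fin, smul_eq_mul]
      · calc (∑ i, (a r * x i).val) < ∑ _i : Fin k, p :=
              Finset.sum_lt_sum_of_nonempty huniv (fun i _ => ZMod.val_lt _)
          _ = k * p := by rw [Finset.sum_const, Finset.card_univ, Fintype.card_fin,
                smul_eq_mul]
    have castY : ∀ r : Fin (p - 1),
        ((∑ i, (a r * x i).val : ℕ) : ZMod p) = a r * (∑ i, x i) := by
      intro r
      push_cast
      rw [Finset.mul_sum]
      exact Finset.sum_congr rfl (fun i _ => by rw [ZMod.natCast_zmod_val])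
    constructor
    · -- completeness
      intro hxg r
      obtain ⟨h1, h2, h3⟩ := key r
      have hmod : (∑ i, (a r * x i).val) % p = (a r * g).val := by
        have hcast : ((∑ i, (a r * x i).val : ℕ) : ZMod p)
            = (((a r * g).val : ℕ) : ZMod p) := by
          rw [castY r, hxg, ZMod.natCast_zmod_val]
        rw [ZMod.natCast_eq_natCast_iff'] at hcast
        rwa [Nat.mod_eq_of_lt (ZMod.val_lt _)] at hcast
      have hYeq : (a r * g).val + ((∑ i, (a r * x i).val) / p) * p
          = ∑ i, (a r * x i).val := by
        conv_rhs => rw [← Nat.mod_add_div (∑ i, (a r * x i).val) p]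
        rw [hmod]; ring
      have hc : (∑ i, (a r * x i).val) / p < k := by
        rw [Nat.div_lt_iff_lt_mul hp0]; exact h3
      show (if _ then _ else _ : Fin 2) = 1
      rw [if_pos]
      refine ⟨(∑ i, (a r * x i).val) / p, hc, ?_⟩
      show (∑ i, ((a r * x i).val * m / p)) * p ≤ _ ∧ _
      rw [hYeq]
      exact ⟨h1, h2⟩
    · -- soundness
      intro hxg
      set d : ZMod p := (∑ i, x i) - g with hd_def
      have hd : d ≠ 0 := sub_ne_zero.mpr hxg
      set w : Fin (p - 1) → ℕ := fun r => (a r * d).val with hw_def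
      have hw_pos : ∀ r, 0 < w r := by
        intro r
        rcases Nat.eq_zero_or_pos (w r) with h | h
        · exact absurd ((ZMod.val_eq_zero _).mp h) (mul_ne_zero (ha_ne r) hd)
        · exact h
      have hw_lt : ∀ r, w r < p := fun r => ZMod.val_lt _
      -- accept at r implies w r near 0 or p
      have hAcc : ∀ r : Fin (p - 1),
          (∃ c < k, (∑ i, ((a r * x i).val * m / p)) * p ≤ ((a r * g).val + c * p) * m ∧
            ((a r * g).val + c * p) * m < (∑ i, ((a r * x i).val * m / p)) * p + k * p) →
          w r * m < k * p ∨ (p - w r) * m < k * p := by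
        intro r hcond
        obtain ⟨c, hck, h1, h2⟩ := hcond
        obtain ⟨hs1, hs2, _⟩ := key r
        set Y := ∑ i, (a r * x i).val with hYdef
        set t := (a r * g).val with htdef
        set S := ∑ i, ((a r * x i).val * m / p) with hSdef
        have d1 : Y * m < (t + c * p) * m + k * p :=
          lt_of_lt_of_le hs2 (Nat.add_le_add_right h1 _)
        have d2 : (t + c * p) * m < Y * m + k * p :=
          lt_of_lt_of_le h2 (Nat.add_le_add_right hs1 _)
        have hM : Y ≡ t + w r [MOD p] := by
          rw [← ZMod.natCast_eq_natCast_iff, castY r]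
          rw [htdef, hw_def]
          push_cast [ZMod.natCast_zmod_val]
          rw [hd_def]
          ring
        obtain ⟨j, hj⟩ := hM.dvd
        push_cast at hj
        have hYval : ((Y : ℕ) : ℤ) = (t : ℤ) + (w r : ℤ) - (p : ℤ) * j := by linarith
        have hz1 : ((Y : ℕ) : ℤ) * m < (((t : ℕ) : ℤ) + (c : ℤ) * p) * m + (k : ℤ) * p := by
          exact_mod_cast d1
        have hz2 : (((t : ℕ) : ℤ) + (c : ℤ) * p) * m < ((Y : ℕ) : ℤ) * m + (k : ℤ) * p := by
          exact_mod_cast d2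
        have hwz : (0 : ℤ) < (w r : ℤ) := by exact_mod_cast hw_pos r
        have hwp : ((w r : ℕ) : ℤ) < (p : ℤ) := by exact_mod_cast hw_lt r
        have hkm' : ((k : ℕ) : ℤ) < (m : ℤ) := by exact_mod_cast hkm
        have hp' : (0 : ℤ) < (p : ℤ) := by exact_mod_cast hp0
        have hm' : (0 : ℤ) < (m : ℤ) := by exact_mod_cast hm0
        have key1 : ((w r : ℤ) - (p : ℤ) * (j + c)) * m
            = ((Y : ℕ) : ℤ) * m - (((t : ℕ) : ℤ) + (c : ℤ) * p) * m := by
          rw [hYval]; ring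
        have e1 : ((w r : ℤ) - (p : ℤ) * (j + c)) * m < (k : ℤ) * p := by
          rw [key1]; linarith
        have e2 : -(((w r : ℤ) - (p : ℤ) * (j + c)) * m) < (k : ℤ) * p := by
          rw [key1]; linarith
        have hE1 : (w r : ℤ) - (p : ℤ) * (j + c) < p := by
          by_contra h
          push_neg at h
          nlinarith
        have hE2 : -(p : ℤ) < (w r : ℤ) - (p : ℤ) * (j + c) := by
          by_contra h
          push_neg at h
          nlinarith
        have hs01 : j + c = 0 ∨ j + c = 1 := by
          have b1 : (p : ℤ) * (j + c) < 2 * p := by linarith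
          have b2 : -(p : ℤ) < (p : ℤ) * (j + c) := by linarith
          have c1 : j + c < 2 := by nlinarith
          have c2 : -1 < j + c := by nlinarith
          omega
        rcases hs01 with h0 | h0
        · left
          have : ((w r : ℕ) : ℤ) * m < (k : ℤ) * p := by
            rw [h0] at e1; simpa using e1
          exact_mod_cast this
        · right
          have hsub : (((p - w r : ℕ) : ℕ) : ℤ) = (p : ℤ) - (w r : ℤ) :=
            by push_cast [Nat.cast_sub (hw_lt r).le]; ring
          have : ((p : ℤ) - (w r : ℤ)) * m < (k : ℤ) * p := by
            rw [h0] at e2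
            nlinarith [e2]
          have : (((p - w r : ℕ) : ℕ) : ℤ) * m < (k : ℤ) * p := by rw [hsub]; exact this
          exact_mod_cast this
      -- counting bad outcomes
      set q := (k * p - 1) / m with hq_def
      have hqm : q * m < k * p := by
        have h := Nat.div_mul_le_self (k * p - 1) m
        have hkp : 0 < k * p := Nat.mul_pos hk hp0
        calc q * m ≤ k * p - 1 := h
          _ < k * p := by omega
      have hmain : ∀ F : Finset (Fin (p - 1)),
          (∀ r ∈ F, w r * m < k * p ∨ (p - w r) * m < k * p) →
          (F.card : ℝ) ≤ ε * ((p - 1 : ℕ) : ℝ) := by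
        intro F hF
        set badv : Finset ℕ := (Finset.Icc 1 (p - 1)).filter
          (fun v => v * m < k * p ∨ (p - v) * m < k * p) with hbadv_def
        have hsubB : badv ⊆ Finset.Icc 1 q ∪ Finset.Icc (p - q) (p - 1) := by
          intro v hv
          rw [hbadv_def, Finset.mem_filter, Finset.mem_Icc] at hv
          obtain ⟨⟨hv1, hv2⟩, hcase⟩ := hv
          rw [Finset.mem_union, Finset.mem_Icc, Finset.mem_Icc]
          rcases hcase with h | h
          · left
            refine ⟨hv1, ?_⟩
            rw [hq_def, Nat.le_div_iff_mul_le hm0]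
            omega
          · right
            have : p - v ≤ q := by
              rw [hq_def, Nat.le_div_iff_mul_le hm0]
              omega
            exact ⟨by omega, hv2⟩
        have hcardB : badv.card ≤ 2 * q := by
          calc badv.card ≤ (Finset.Icc 1 q ∪ Finset.Icc (p - q) (p - 1)).card :=
                Finset.card_le_card hsubB
            _ ≤ (Finset.Icc 1 q).card + (Finset.Icc (p - q) (p - 1)).card :=
                Finset.card_union_le _ _
            _ ≤ 2 * q := by
                rw [Nat.card_Icc, Nat.card_Icc]
                omega
        have hFB : F.card ≤ badv.card := by
          apply Finset.card_le_card_of_injOn w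
          · intro r hr
            rw [hbadv_def, Finset.mem_coe, Finset.mem_filter, Finset.mem_Icc]
            exact ⟨⟨hw_pos r, by have := hw_lt r; omega⟩, hF r hr⟩
          · intro r1 _ r2 _ hww
            have h1 : a r1 * d = a r2 * d := ZMod.val_injective p hww
            have h2 : a r1 = a r2 := mul_right_cancel₀ hd h1
            have h3 : (r1 : ℕ) + 1 = (r2 : ℕ) + 1 := by
              rw [← ha_val r1, ← ha_val r2, h2]
            exact Fin.ext (by omega)
        -- now to the reals
        have hFq : F.card ≤ 2 * q := hFB.trans hcardB
        have hFm : F.card * m ≤ 2 * (k * p) := by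
          calc F.card * m ≤ (2 * q) * m := Nat.mul_le_mul_right m hFq
            _ = 2 * (q * m) := by ring
            _ ≤ 2 * (k * p) := by omega
        have hFmr : (F.card : ℝ) * m ≤ 2 * (k * p) := by exact_mod_cast hFm
        have hεm : 4 * (k : ℝ) ≤ ε * m := by
          rw [div_le_iff₀ hε] at hm_ge
          linarith
        have hFc : (0 : ℝ) ≤ (F.card : ℝ) := Nat.cast_nonneg _
        have step1 : (F.card : ℝ) * (4 * k) ≤ ε * (2 * (k * p)) := by
          calc (F.card : ℝ) * (4 * k) ≤ (F.card : ℝ) * (ε * m) := by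
                exact mul_le_mul_of_nonneg_left hεm hFc
            _ = ε * ((F.card : ℝ) * m) := by ring
            _ ≤ ε * (2 * (k * p)) := by
                exact mul_le_mul_of_nonneg_left hFmr hε.le
        have hpcast : ((p - 1 : ℕ) : ℝ) = (p : ℝ) - 1 := by
          have : 1 ≤ p := by omega
          push_cast [Nat.cast_sub this]
          ring
        rw [hpcast]
        have hp2r : (2 : ℝ) ≤ p := by exact_mod_cast hp2
        have haux : (0:ℝ) ≤ ε * k * ((p:ℝ) - 2) := by
          apply mul_nonneg (mul_nonneg hε.le hk0.le)
          linarith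
        nlinarith [step1, haux, hk0]
      refine hmain _ ?_
      intro r hr
      rw [Finset.mem_filter] at hr
      have hr2 := hr.2
      beta_reduce at hr2
      split_ifs at hr2 with hP
      · exact hAcc r hP
      · exact absurd hr2 (by decide)
  · -- communication bound
    have hm5 : (m : ℝ) ≤ 8 * ((k:ℝ) / ε) := by
      have h1 : (m : ℝ) < (4 * k : ℝ) / ε + 1 := Nat.ceil_lt_add_one (by positivity)
      have h2 : (1 : ℝ) ≤ (k : ℝ) / ε := by
        rw [le_div_iff₀ hε]
        have : (1:ℝ) ≤ k := by exact_mod_cast hk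
        nlinarith
      have h3 : (4 * k : ℝ) / ε = 4 * ((k:ℝ)/ε) := by ring
      nlinarith
    have hL : (Nat.clog 2 m : ℝ) ≤ Real.logb 2 ((k:ℝ)/ε) + 4 := by
      have hm2 : 1 < m := by omega
      have hpow := Nat.pow_pred_clog_lt_self (by norm_num : 1 < 2) hm2
      have hke : (0:ℝ) < (k:ℝ)/ε := by positivity
      have hL1 : 1 ≤ Nat.clog 2 m := by
        rw [Nat.one_le_iff_ne_zero]
        intro h
        have := Nat.le_pow_clog (by norm_num : 1 < 2) m
        rw [h] at this
        omega
      have hpow2 : (2:ℝ) ^ (Nat.clog 2 m) ≤ 16 * ((k:ℝ)/ε) := by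
        have : (2:ℝ) ^ (Nat.clog 2 m) = 2 * (2:ℝ) ^ (Nat.clog 2 m - 1) := by
          rw [← pow_succ']
          congr 1
          omega
        rw [this]
        have hcast : ((2:ℕ) ^ (Nat.clog 2 m - 1) : ℝ) < (m : ℝ) := by exact_mod_cast hpow
        push_cast at hcast
        nlinarith
      have := (Real.le_logb_iff_rpow_le (by norm_num : (1:ℝ) < 2)
        (by positivity : (0:ℝ) < 16 * ((k:ℝ)/ε))).mpr
        (by rw [Real.rpow_natCast]; exact hpow2)
      have hlog16 : Real.logb 2 (16 * ((k:ℝ)/ε)) = 4 + Real.logb 2 ((k:ℝ)/ε) := by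
        rw [Real.logb_mul (by norm_num) (ne_of_gt hke)]
        congr 1
        have : (16:ℝ) = 2 ^ (4:ℕ) := by norm_num
        rw [this, Real.logb_pow, Real.logb_self_eq_one (by norm_num)]
        norm_num
      linarith [this, hlog16.le]
    push_cast
    have hknn : (0:ℝ) ≤ k := hk0.le
    nlinarith [hL, hknn]
end
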